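/- arXiv:2312.12032 — 7 statements merged into one kernel-verified Lean document; each statement's English description precedes it below -/
import Mathlib

section
/- If f : ℝⁿ → ℝ is locally Lipschitz, x₀ ∈ ℝⁿ, v ∈ ℝⁿ \ {0}, and ε > 0, then for all t ∈ (0, ε/‖v‖], f(x₀ + t v) ≤ f(x₀) + t · max{⟨ξ, v⟩ : ξ ∈ ∂_ε f(x₀)}, where ∂_ε f(x₀) is the Goldstein ε-subdifferential (the convex hull of the union of Clarke subdifferentials over the closed ε-ball around x₀). -/
open Filter Set Topology RealInnerProductSpace NNReal

noncomputable def clarkeDir {E : Type*} [NormedAddCommGroup E] [InnerProductSpace ℝ E]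
    (f : E → ℝ) (x v : E) : ℝ :=
  Filter.limsup (fun p : E × ℝ => (f (p.1 + p.2 • v) - f p.1) / p.2)
    ((nhds x) ×ˢ (nhdsWithin 0 (Set.Ioi 0)))

noncomputable def clarkeSubdiff {E : Type*} [NormedAddCommGroup E] [InnerProductSpace ℝ E]
    (f : E → ℝ) (x : E) : Set E :=
  {ξ | ∀ v, ⟪ξ, v⟫ ≤ clarkeDir f x v}

noncomputable def goldsteinSubdiff {E : Type*} [NormedAddCommGroup E] [InnerProductSpace ℝ E]
    (f : E → ℝ) (ε : ℝ) (x : E) : Set E :=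
  convexHull ℝ (⋃ y ∈ Metric.closedBall x ε, clarkeSubdiff f y)

namespace ClarkeProof

variable {E : Type*} [NormedAddCommGroup E] [InnerProductSpace ℝ E]

/-- The filter used in the Clarke directional derivative. -/
noncomputable def Φ (y : E) : Filter (E × ℝ) := (nhds y) ×ˢ (nhdsWithin 0 (Set.Ioi 0))

/-- The difference quotient. -/
noncomputable def u (f : E → ℝ) (w : E) (p : E × ℝ) : ℝ := (f (p.1 + p.2 • w) - f p.1) / p.2

lemma clarkeDir_eq (f : E → ℝ) (y w : E) :
    clarkeDir f y w = Filter.limsup (u f w) (Φ y) := rfl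

instance phi_neBot (y : E) : (Φ y).NeBot := by
  unfold Φ
  exact Filter.prod_neBot.2 ⟨inferInstance, inferInstance⟩

/-- Local Lipschitz property at a point, with an explicit ball. -/
def LipAt (f : E → ℝ) (y : E) : Prop :=
  ∃ K : ℝ≥0, ∃ δ : ℝ, 0 < δ ∧ LipschitzOnWith K f (Metric.ball y δ)

lemma lipAt_of_locallyLipschitz {f : E → ℝ} (hf : LocallyLipschitz f) (y : E) : LipAt f y := by
  obtain ⟨K, t, ht, hl⟩ := hf y
  obtain ⟨δ, hδ, hb⟩ := Metric.mem_nhds_iff.1 ht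
  exact ⟨K, δ, hδ, hl.mono hb⟩

lemma eventually_abs_le {f : E → ℝ} {K : ℝ≥0} {y : E} {δ : ℝ} (hδ : 0 < δ)
    (hl : LipschitzOnWith K f (Metric.ball y δ)) (w : E) :
    ∀ᶠ p in Φ y, |u f w p| ≤ K * ‖w‖ := by
  have h1 : Metric.ball y (δ/2) ∈ 𝓝 y := Metric.ball_mem_nhds _ (by linarith)
  have h2 : Set.Ioo (0:ℝ) (δ / (2 * (‖w‖+1))) ∈ 𝓝[>] (0:ℝ) :=
    Ioo_mem_nhdsGT (by positivity)
  have hmem : (Metric.ball y (δ/2)) ×ˢ (Set.Ioo (0:ℝ) (δ / (2 * (‖w‖+1)))) ∈ Φ y :=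
    Filter.prod_mem_prod h1 h2
  filter_upwards [hmem] with p hp
  obtain ⟨hz, hr⟩ := hp
  have hr0 : 0 < p.2 := hr.1
  have hwpos : (0:ℝ) < ‖w‖ + 1 := by positivity
  have hw : p.2 * ‖w‖ < δ/2 := by
    have h3 : p.2 * (‖w‖+1) < (δ / (2*(‖w‖+1))) * (‖w‖+1) :=
      mul_lt_mul_of_pos_right hr.2 hwpos
    have h4 : (δ / (2*(‖w‖+1))) * (‖w‖+1) = δ/2 := by field_simp
    nlinarith [norm_nonneg w]
  have hdist : dist (p.1 + p.2 • w) p.1 = p.2 * ‖w‖ := by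
    rw [dist_eq_norm]
    simp [norm_smul, abs_of_pos hr0]
  have hz2 : p.1 + p.2 • w ∈ Metric.ball y δ := by
    rw [Metric.mem_ball] at hz ⊢
    calc dist (p.1 + p.2 • w) y ≤ dist (p.1 + p.2 • w) p.1 + dist p.1 y := dist_triangle _ _ _
      _ < δ/2 + δ/2 := add_lt_add (by rw [hdist]; exact hw) hz
      _ = δ := by ring
  have hz1 : p.1 ∈ Metric.ball y δ := Metric.mem_ball.2 (lt_trans (Metric.mem_ball.1 hz) (by linarith))
  have hlip := (lipschitzOnWith_iff_dist_le_mul.1 hl) _ hz2 _ hz1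
  rw [dist_eq_norm] at hlip
  have : |u f w p| = |f (p.1 + p.2 • w) - f p.1| / p.2 := by
    rw [u, abs_div, abs_of_pos hr0]
  rw [this]
  rw [div_le_iff₀ hr0]
  calc |f (p.1 + p.2 • w) - f p.1| ≤ K * dist (p.1 + p.2 • w) p.1 := hlip
    _ = ↑K * ‖w‖ * p.2 := by rw [hdist]; ring

lemma isBoundedUnder_le_of_abs {α : Type*} {l : Filter α} {g : α → ℝ} {B : ℝ}
    (h : ∀ᶠ x in l, |g x| ≤ B) : Filter.IsBoundedUnder (· ≤ ·) l g :=
  ⟨B, Filter.eventually_map.mpr (h.mono fun x hx => (abs_le.1 hx).2)⟩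

lemma isBoundedUnder_ge_of_abs {α : Type*} {l : Filter α} {g : α → ℝ} {B : ℝ}
    (h : ∀ᶠ x in l, |g x| ≤ B) : Filter.IsBoundedUnder (· ≥ ·) l g :=
  ⟨-B, Filter.eventually_map.mpr (h.mono fun x hx => (abs_le.1 hx).1)⟩

lemma isCoboundedUnder_le_of_abs {α : Type*} {l : Filter α} [l.NeBot] {g : α → ℝ} {B : ℝ}
    (h : ∀ᶠ x in l, |g x| ≤ B) : Filter.IsCoboundedUnder (· ≤ ·) l g :=
  (isBoundedUnder_ge_of_abs h).isCoboundedUnder_le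

lemma limsup_comp_eq {α β : Type*} (g : β → ℝ) (m : α → β) (l : Filter α) :
    Filter.limsup (fun x => g (m x)) l = Filter.limsup g (Filter.map m l) := by
  simp only [Filter.limsup, Filter.map_map, Function.comp_def]

/-- Composition with a map tending to the same filter does not increase the limsup. -/
lemma limsup_comp_le {f : E → ℝ} {K : ℝ≥0} {y : E} {δ : ℝ} (hδ : 0 < δ)
    (hl : LipschitzOnWith K f (Metric.ball y δ)) (w : E)
    {m : E × ℝ → E × ℝ} (hm : Filter.Tendsto m (Φ y) (Φ y)) :
    Filter.limsup (fun p => u f w (m p)) (Φ y) ≤ Filter.limsup (u f w) (Φ y) := by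
  have hev := eventually_abs_le hδ hl w
  rw [limsup_comp_eq]
  refine Filter.limsup_le_limsup_of_le hm ?_ ?_
  · haveI : (Filter.map m (Φ y)).NeBot := (phi_neBot y).map m
    exact isCoboundedUnder_le_of_abs (Filter.eventually_map.mpr (hm.eventually hev))
  · exact isBoundedUnder_le_of_abs hev

lemma clarkeDir_zero (f : E → ℝ) (y : E) : clarkeDir f y 0 = 0 := by
  rw [clarkeDir_eq]
  have : u f (0:E) = fun _ => (0:ℝ) := by
    funext p; simp [u]
  rw [this]
  exact Filter.limsup_const 0

lemma clarkeDir_add_le {f : E → ℝ} {y : E} (h : LipAt f y) (w₁ w₂ : E) :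
    clarkeDir f y (w₁ + w₂) ≤ clarkeDir f y w₁ + clarkeDir f y w₂ := by
  obtain ⟨K, δ, hδ, hl⟩ := h
  set m : E × ℝ → E × ℝ := fun p => (p.1 + p.2 • w₂, p.2) with hm_def
  have hm : Filter.Tendsto m (Φ y) (Φ y) := by
    unfold Φ
    refine Filter.Tendsto.prodMk ?_ tendsto_snd
    have h1 : Filter.Tendsto (fun p : E × ℝ => p.1) (Φ y) (𝓝 y) := tendsto_fst
    have h2 : Filter.Tendsto (fun p : E × ℝ => p.2) (Φ y) (𝓝 (0:ℝ)) :=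
      tendsto_snd.mono_right nhdsWithin_le_nhds
    have := h1.add (h2.smul_const w₂)
    simpa [Φ] using this
  have key : ∀ p, u f (w₁ + w₂) p = u f w₁ (m p) + u f w₂ p := by
    rintro ⟨z, r⟩
    by_cases hr : r = 0
    · simp [u, hr, hm_def]
    · simp only [u, hm_def]
      rw [← add_div]
      have harg : z + r • (w₁ + w₂) = z + r • w₂ + r • w₁ := by
        rw [smul_add]; abel
      rw [harg]; ring_nf
  have hev₁ := eventually_abs_le hδ hl w₁
  have hev₂ := eventually_abs_le hδ hl w₂
  have hev₁' : ∀ᶠ p in Φ y, |u f w₁ (m p)| ≤ K * ‖w₁‖ := hm.eventually hev₁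
  rw [clarkeDir_eq, clarkeDir_eq, clarkeDir_eq]
  have hkey : Filter.limsup (u f (w₁ + w₂)) (Φ y)
      = Filter.limsup ((fun p => u f w₁ (m p)) + u f w₂) (Φ y) := by
    congr 1; funext p; exact key p
  rw [hkey]
  calc Filter.limsup ((fun p => u f w₁ (m p)) + u f w₂) (Φ y)
      ≤ Filter.limsup (fun p => u f w₁ (m p)) (Φ y) + Filter.limsup (u f w₂) (Φ y) :=
        limsup_add_le (isBoundedUnder_ge_of_abs hev₁')
          (isBoundedUnder_le_of_abs hev₁')
          (isCoboundedUnder_le_of_abs hev₂) (isBoundedUnder_le_of_abs hev₂)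
    _ ≤ Filter.limsup (u f w₁) (Φ y) + Filter.limsup (u f w₂) (Φ y) :=
        add_le_add (limsup_comp_le hδ hl w₁ hm) le_rfl

lemma clarkeDir_smul_le {f : E → ℝ} {y : E} (h : LipAt f y) {c : ℝ} (hc : 0 < c) (w : E) :
    clarkeDir f y (c • w) ≤ c * clarkeDir f y w := by
  obtain ⟨K, δ, hδ, hl⟩ := h
  set m : E × ℝ → E × ℝ := fun p => (p.1, c * p.2) with hm_def
  have hm : Filter.Tendsto m (Φ y) (Φ y) := by
    unfold Φ
    refine Filter.Tendsto.prodMk tendsto_fst ?_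
    have h1 : Filter.Tendsto (fun r : ℝ => c * r) (𝓝[>] (0:ℝ)) (𝓝[>] (0:ℝ)) := by
      refine tendsto_nhdsWithin_of_tendsto_nhds_of_eventually_within _ ?_ ?_
      · have : Filter.Tendsto (fun r : ℝ => c * r) (𝓝 (0:ℝ)) (𝓝 (c * 0)) :=
          (continuous_const.mul continuous_id).tendsto 0
        simpa using this.mono_left nhdsWithin_le_nhds
      · exact eventually_mem_nhdsWithin.mono fun r hr => mul_pos hc hr
    exact h1.comp tendsto_snd
  have key : ∀ p, u f (c • w) p = c * u f w (m p) := by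
    rintro ⟨z, r⟩
    by_cases hr : r = 0
    · simp [u, hr, hm_def]
    · simp only [u, hm_def]
      have harg : r • (c • w) = (c * r) • w := by
        rw [smul_smul, mul_comm]
      rw [harg]
      have hcr : c * r ≠ 0 := mul_ne_zero hc.ne' hr
      field_simp
  have hev : ∀ᶠ p in Φ y, |u f w (m p)| ≤ K * ‖w‖ := hm.eventually (eventually_abs_le hδ hl w)
  have hkey : clarkeDir f y (c • w) = Filter.limsup (fun p => c * u f w (m p)) (Φ y) := by
    rw [clarkeDir_eq]; congr 1; funext p; exact key p
  rw [hkey]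
  refine le_of_forall_pos_le_add fun η hη => ?_
  set b : ℝ := clarkeDir f y w + η / c with hb_def
  have hbgt : Filter.limsup (fun p => u f w (m p)) (Φ y) < b := by
    have h1 : Filter.limsup (fun p => u f w (m p)) (Φ y) ≤ clarkeDir f y w :=
      limsup_comp_le hδ hl w hm
    have : clarkeDir f y w < b := by
      rw [hb_def]; exact lt_add_of_pos_right _ (by positivity)
    exact lt_of_le_of_lt h1 this
  have hevlt : ∀ᶠ p in Φ y, u f w (m p) < b :=
    Filter.eventually_lt_of_limsup_lt hbgt (isBoundedUnder_le_of_abs hev)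
  have hcb : c * b = c * clarkeDir f y w + η := by
    rw [hb_def]; field_simp
  calc Filter.limsup (fun p => c * u f w (m p)) (Φ y) ≤ c * b := by
        refine Filter.limsup_le_of_le ?_ ?_
        · refine Filter.IsBoundedUnder.isCoboundedUnder_le ?_
          exact ⟨c * (-(K * ‖w‖)), Filter.eventually_map.mpr (hev.mono fun p hp =>
            mul_le_mul_of_nonneg_left (abs_le.1 hp).1 hc.le)⟩
        · exact hevlt.mono fun p hp => mul_le_mul_of_nonneg_left hp.le hc.le
    _ = c * clarkeDir f y w + η := hcb

lemma clarkeDir_le_of_lip {f : E → ℝ} {K : ℝ≥0} {y : E} {δ : ℝ} (hδ : 0 < δ)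
    (hl : LipschitzOnWith K f (Metric.ball y δ)) (w : E) :
    clarkeDir f y w ≤ K * ‖w‖ := by
  rw [clarkeDir_eq]
  have hev := eventually_abs_le hδ hl w
  exact Filter.limsup_le_of_le (isCoboundedUnder_le_of_abs hev)
    (hev.mono fun p hp => (abs_le.1 hp).2)

lemma exists_mem_clarkeSubdiff [CompleteSpace E] [FiniteDimensional ℝ E] {f : E → ℝ} {y : E}
    (h : LipAt f y) {v : E} (hv : v ≠ 0) :
    ∃ ξ ∈ clarkeSubdiff f y, ⟪ξ, v⟫ = clarkeDir f y v := by
  set N : E → ℝ := clarkeDir f y with hN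
  have N0 : N 0 = 0 := clarkeDir_zero f y
  have Nhom : ∀ c : ℝ, 0 < c → ∀ x, N (c • x) = c * N x := by
    intro c hc x
    refine le_antisymm (clarkeDir_smul_le h hc x) ?_
    have h2 := clarkeDir_smul_le h (inv_pos.2 hc) (c • x)
    rw [inv_smul_smul₀ hc.ne'] at h2
    calc c * N x ≤ c * (c⁻¹ * N (c • x)) := mul_le_mul_of_nonneg_left h2 hc.le
      _ = N (c • x) := by field_simp
  have Nadd : ∀ a b : E, N (a + b) ≤ N a + N b := fun a b => clarkeDir_add_le h a b
  set F : E →ₗ.[ℝ] ℝ := LinearPMap.mkSpanSingleton v (N v) hv with hF_def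
  have hF : ∀ x : F.domain, F x ≤ N x := by
    rintro ⟨x, hx⟩
    have hx' : x ∈ Submodule.span ℝ {v} := hx
    obtain ⟨a, rfl⟩ := Submodule.mem_span_singleton.1 hx'
    have happ : F ⟨a • v, hx⟩ = a • N v :=
      LinearPMap.mkSpanSingleton'_apply v (N v) _ a hx
    rw [happ]
    simp only [smul_eq_mul]
    rcases lt_trichotomy a 0 with ha | ha | ha
    · have h1 : (0:ℝ) ≤ N (a • v) + N (-(a • v)) := by
        have := Nadd (a • v) (-(a • v))
        simpa [N0] using this
      have h2 : N (-(a • v)) = (-a) * N v := by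
        rw [← neg_smul]
        exact Nhom (-a) (by linarith) v
      rw [h2] at h1
      linarith
    · simp [ha, N0]
    · rw [Nhom a ha v]
  obtain ⟨g, hg1, hg2⟩ := exists_extension_of_le_sublinear F N Nhom Nadd hF
  set ξ : E := (InnerProductSpace.toDual ℝ E).symm (LinearMap.toContinuousLinearMap g) with hξ_def
  have hξ : ∀ w : E, ⟪ξ, w⟫ = g w := by
    intro w
    rw [hξ_def, InnerProductSpace.toDual_symm_apply]
    simp
  refine ⟨ξ, fun w => by rw [hξ]; exact hg2 w, ?_⟩
  rw [hξ]
  have hmem : v ∈ F.domain := by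
    show v ∈ Submodule.span ℝ {v}
    exact Submodule.mem_span_singleton_self v
  have := hg1 ⟨v, hmem⟩
  rw [this]
  show F ⟨v, hmem⟩ = N v
  exact LinearPMap.mkSpanSingleton_apply ℝ ℝ hv (N v)

lemma le_of_clarkeDir_le {f : E → ℝ} (hf : LocallyLipschitz f) {x₀ v : E} {t c : ℝ}
    (ht : 0 < t) (hc : ∀ s ∈ Set.Icc (0:ℝ) t, clarkeDir f (x₀ + s • v) v ≤ c) :
    f (x₀ + t • v) ≤ f x₀ + c * t := by
  have main : ∀ c' : ℝ, c < c' → f (x₀ + t • v) ≤ f x₀ + c' * t := by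
    intro c' hc'
    set A := {s : ℝ | s ∈ Set.Icc (0:ℝ) t ∧ f (x₀ + s • v) ≤ f x₀ + c' * s} with hA_def
    have hA0 : (0:ℝ) ∈ A := ⟨⟨le_refl _, ht.le⟩, by simp⟩
    have hbdd : BddAbove A := ⟨t, fun s hs => hs.1.2⟩
    have hclosed : IsClosed A := by
      have hcont : Continuous fun s : ℝ => f (x₀ + s • v) - c' * s := by
        apply Continuous.sub
        · exact hf.continuous.comp (by continuity)
        · continuity
      have hAeq : A = Set.Icc (0:ℝ) t ∩ {s : ℝ | f (x₀ + s • v) - c' * s ≤ f x₀} := by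
        ext s
        simp only [hA_def, Set.mem_setOf_eq, Set.mem_inter_iff]
        constructor
        · rintro ⟨h1, h2⟩; exact ⟨h1, by linarith⟩
        · rintro ⟨h1, h2⟩; exact ⟨h1, by linarith⟩
      rw [hAeq]
      exact isClosed_Icc.inter (isClosed_le hcont continuous_const)
    set s₀ := sSup A with hs₀_def
    have hs₀A : s₀ ∈ A := hclosed.csSup_mem ⟨0, hA0⟩ hbdd
    by_cases hst : s₀ = t
    · have := hs₀A.2
      rw [hst] at this
      exact this
    have hs₀t : s₀ < t := lt_of_le_of_ne hs₀A.1.2 hst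
    exfalso
    set y := x₀ + s₀ • v with hy_def
    obtain ⟨K, δ, hδ, hl⟩ := lipAt_of_locallyLipschitz hf y
    have hmape : Filter.Tendsto (fun r : ℝ => ((y, r) : E × ℝ)) (𝓝[>] (0:ℝ)) (Φ y) := by
      unfold Φ
      exact Filter.Tendsto.prodMk tendsto_const_nhds tendsto_id
    have habs := eventually_abs_le hδ hl v
    have habs' : ∀ᶠ r in 𝓝[>] (0:ℝ), |u f v (y, r)| ≤ K * ‖v‖ := hmape.eventually habs
    have hlim : Filter.limsup (fun r => u f v (y, r)) (𝓝[>] (0:ℝ)) ≤ clarkeDir f y v := by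
      rw [clarkeDir_eq, limsup_comp_eq]
      refine Filter.limsup_le_limsup_of_le hmape ?_ ?_
      · haveI : (Filter.map (fun r : ℝ => ((y, r) : E × ℝ)) (𝓝[>] (0:ℝ))).NeBot := Filter.NeBot.map inferInstance _
        exact isCoboundedUnder_le_of_abs (Filter.eventually_map.mpr habs')
      · exact isBoundedUnder_le_of_abs habs
    have hlt : Filter.limsup (fun r => u f v (y, r)) (𝓝[>] (0:ℝ)) < c' :=
      lt_of_le_of_lt (hlim.trans (hc s₀ hs₀A.1)) hc'
    have hev : ∀ᶠ r in 𝓝[>] (0:ℝ), u f v (y, r) < c' :=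
      Filter.eventually_lt_of_limsup_lt hlt (isBoundedUnder_le_of_abs habs')
    have hev2 : Set.Ioc (0:ℝ) (t - s₀) ∈ 𝓝[>] (0:ℝ) :=
      Ioc_mem_nhdsGT (by linarith)
    obtain ⟨r, hr1, hr2⟩ := (hev.and hev2).exists
    have hr0 : 0 < r := hr2.1
    have hval : f (y + r • v) < f y + c' * r := by
      have : (f (y + r • v) - f y) / r < c' := hr1
      rw [div_lt_iff₀ hr0] at this
      linarith
    have hmemA : s₀ + r ∈ A := by
      constructor
      · exact ⟨by linarith [hs₀A.1.1], by linarith [hr2.2]⟩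
      · have harg : x₀ + (s₀ + r) • v = y + r • v := by
          rw [hy_def, add_smul]; abel
        rw [harg]
        have := hs₀A.2
        linarith
    have : s₀ + r ≤ s₀ := le_csSup hbdd hmemA
    linarith
  have h2 : f (x₀ + t • v) - f x₀ ≤ c * t := by
    refine le_of_forall_pos_le_add fun η hη => ?_
    have h3 := main (c + η / t) (lt_add_of_pos_right _ (by positivity))
    have h4 : (c + η / t) * t = c * t + η := by field_simp
    linarith
  linarith

lemma norm_le_of_clarke {f : E → ℝ} {K : ℝ≥0} {y : E} {δ : ℝ} (hδ : 0 < δ)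
    (hl : LipschitzOnWith K f (Metric.ball y δ)) {ξ : E} (hξ : ξ ∈ clarkeSubdiff f y) :
    ‖ξ‖ ≤ K := by
  have h2 : ⟪ξ, ξ⟫ ≤ K * ‖ξ‖ := (hξ ξ).trans (clarkeDir_le_of_lip hδ hl ξ)
  rw [real_inner_self_eq_norm_mul_norm] at h2
  rcases (norm_nonneg ξ).eq_or_lt with h | h
  · rw [← h]; exact K.coe_nonneg
  · exact le_of_mul_le_mul_right h2 h

lemma goldstein_bdd [FiniteDimensional ℝ E] {f : E → ℝ} (hf : LocallyLipschitz f)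
    (x₀ : E) (ε : ℝ) :
    ∃ C : ℝ, ∀ ξ ∈ goldsteinSubdiff f ε x₀, ‖ξ‖ ≤ C := by
  have hcomp : IsCompact (Metric.closedBall x₀ ε) := isCompact_closedBall _ _
  choose K S hS hK using fun y => hf y
  obtain ⟨tset, _htsub, hcover⟩ := hcomp.elim_nhds_subcover (fun y => interior (S y))
    (fun y _ => interior_mem_nhds.2 (hS y))
  set C : ℝ := ((tset.sup K : ℝ≥0) : ℝ) with hC_def
  refine ⟨C, ?_⟩
  have hsub : (⋃ y ∈ Metric.closedBall x₀ ε, clarkeSubdiff f y) ⊆ Metric.closedBall 0 C := by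
    rintro ξ hξ
    rw [Set.mem_iUnion₂] at hξ
    obtain ⟨y', hy', hξ'⟩ := hξ
    have hy'' := hcover hy'
    rw [Set.mem_iUnion₂] at hy''
    obtain ⟨yi, hyi, hyint⟩ := hy''
    obtain ⟨δ, hδ, hball⟩ := Metric.isOpen_iff.1 isOpen_interior y' hyint
    have hlip : LipschitzOnWith (K yi) f (Metric.ball y' δ) :=
      (hK yi).mono (hball.trans interior_subset)
    have h1 : ‖ξ‖ ≤ K yi := norm_le_of_clarke hδ hlip hξ'
    rw [mem_closedBall_zero_iff]
    refine h1.trans ?_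
    rw [hC_def]
    exact_mod_cast NNReal.coe_le_coe.2 (Finset.le_sup hyi)
  intro ξ hξ
  have : goldsteinSubdiff f ε x₀ ⊆ Metric.closedBall 0 C :=
    convexHull_min hsub (convex_closedBall _ _)
  exact mem_closedBall_zero_iff.1 (this hξ)

end ClarkeProof

open ClarkeProof in
theorem stmt0 {n : ℕ} (f : EuclideanSpace ℝ (Fin n) → ℝ) (hf : LocallyLipschitz f)
    (x₀ v : EuclideanSpace ℝ (Fin n)) (hv : v ≠ 0) (ε : ℝ) (hε : 0 < ε) :
    ∀ t ∈ Set.Ioc (0:ℝ) (ε / ‖v‖),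
      f (x₀ + t • v) ≤ f x₀ + t * sSup ((fun ξ => ⟪ξ, v⟫) '' goldsteinSubdiff f ε x₀) := by
  intro t ht
  have hv0 : (0:ℝ) < ‖v‖ := norm_pos_iff.2 hv
  have htε : t * ‖v‖ ≤ ε := (le_div_iff₀ hv0).1 ht.2
  have hball : ∀ s ∈ Set.Icc (0:ℝ) t, x₀ + s • v ∈ Metric.closedBall x₀ ε := by
    intro s hs
    rw [Metric.mem_closedBall, dist_eq_norm]
    have : x₀ + s • v - x₀ = s • v := by abel
    rw [this, norm_smul, Real.norm_eq_abs, abs_of_nonneg hs.1]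
    calc s * ‖v‖ ≤ t * ‖v‖ := mul_le_mul_of_nonneg_right hs.2 hv0.le
      _ ≤ ε := htε
  obtain ⟨C, hC⟩ := goldstein_bdd hf x₀ ε
  set Sv := (fun ξ => ⟪ξ, v⟫) '' goldsteinSubdiff f ε x₀ with hSv_def
  have hSvBdd : BddAbove Sv := by
    refine ⟨C * ‖v‖, ?_⟩
    rintro _ ⟨ξ, hξ, rfl⟩
    exact (real_inner_le_norm ξ v).trans (mul_le_mul_of_nonneg_right (hC ξ hξ) (norm_nonneg v))
  have hc : ∀ s ∈ Set.Icc (0:ℝ) t, clarkeDir f (x₀ + s • v) v ≤ sSup Sv := by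
    intro s hs
    obtain ⟨ξ, hξmem, hξval⟩ := exists_mem_clarkeSubdiff (lipAt_of_locallyLipschitz hf _) hv
    rw [← hξval]
    refine le_csSup hSvBdd ?_
    exact ⟨ξ, subset_convexHull ℝ _ (Set.mem_biUnion (hball s hs) hξmem), rfl⟩
  have hmain := le_of_clarkeDir_le hf ht.1 hc
  linarith [hmain]
end

section
/- Let f : ℝⁿ → ℝ be locally Lipschitz, ε > 0, x₀ ∈ ℝⁿ, and v̄ the negative of the minimum-norm element of ∂_ε f(x₀). If v̄ ≠ 0, then f(x₀ + (ε/‖v̄‖) v̄) ≤ f(x₀) - ε‖v̄‖. -/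
open Filter Set Topology RealInnerProductSpace

namespace ClarkeAux

variable {E : Type*} [NormedAddCommGroup E] [InnerProductSpace ℝ E]

/-- the base filter -/
def Fx (x : E) : Filter (E × ℝ) := (nhds x) ×ˢ (nhdsWithin 0 (Set.Ioi 0))

/-- difference quotient -/
noncomputable def dq (f : E → ℝ) (v : E) (p : E × ℝ) : ℝ := (f (p.1 + p.2 • v) - f p.1) / p.2

lemma clarkeDir_eq (f : E → ℝ) (x v : E) : clarkeDir f x v = limsup (dq f v) (Fx x) := rfl

instance Fx_neBot (x : E) : (Fx x).NeBot := by
  unfold Fx; infer_instance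

lemma dq_bound (f : E → ℝ) (hf : LocallyLipschitz f) (x v : E) :
    ∃ C : ℝ, ∀ᶠ p in Fx x, |dq f v p| ≤ C := by
  obtain ⟨K, t, ht, hK⟩ := hf x
  obtain ⟨r, hr, hball⟩ := Metric.mem_nhds_iff.1 ht
  refine ⟨K * ‖v‖, ?_⟩
  have h1 : ∀ᶠ q in 𝓝 x, q ∈ Metric.ball x (r / 2) :=
    Metric.ball_mem_nhds x (by linarith)
  have h2 : ∀ᶠ s in 𝓝[>] (0 : ℝ), s ∈ Ioo 0 (r / (2 * (‖v‖ + 1))) :=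
    Ioo_mem_nhdsGT_of_mem ⟨le_refl 0, by positivity⟩
  filter_upwards [h1.prod_mk h2] with p hp
  have hq := hp.1
  have hs0 := hp.2.1
  have hsu := hp.2.2
  have hnv : 0 ≤ ‖v‖ := norm_nonneg v
  have hsv : p.2 * ‖v‖ < r / 2 := by
    calc p.2 * ‖v‖ ≤ p.2 * (‖v‖ + 1) := by nlinarith
    _ < (r / (2 * (‖v‖ + 1))) * (‖v‖ + 1) := by
        apply mul_lt_mul_of_pos_right hsu; positivity
    _ = r / 2 := by field_simp
  have hq1 : p.1 ∈ t := hball (by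
    have : dist p.1 x < r := lt_trans (by simpa using hq) (by linarith)
    simpa [Metric.mem_ball] using this)
  have hq2 : p.1 + p.2 • v ∈ t := hball (by
    have h' : dist (p.1 + p.2 • v) x ≤ dist p.1 x + ‖p.2 • v‖ := by
      rw [dist_eq_norm, dist_eq_norm]
      calc ‖p.1 + p.2 • v - x‖ = ‖(p.1 - x) + p.2 • v‖ := by rw [add_sub_right_comm]
      _ ≤ ‖p.1 - x‖ + ‖p.2 • v‖ := norm_add_le _ _
    have hsmul : ‖p.2 • v‖ = p.2 * ‖v‖ := by
      rw [norm_smul, Real.norm_eq_abs, abs_of_pos hs0]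
    have hd : dist p.1 x < r / 2 := by simpa [Metric.mem_ball] using hq
    have : dist (p.1 + p.2 • v) x < r := by rw [hsmul] at h'; linarith
    simpa [Metric.mem_ball] using this)
  have hlip := hK.dist_le_mul _ hq2 _ hq1
  have hdist : dist (p.1 + p.2 • v) p.1 = p.2 * ‖v‖ := by
    rw [dist_eq_norm]
    simp [norm_smul, Real.norm_eq_abs, abs_of_pos hs0]
  rw [Real.dist_eq, hdist] at hlip
  have : |dq f v p| = |f (p.1 + p.2 • v) - f p.1| / p.2 := by
    rw [dq, abs_div, abs_of_pos hs0]
  rw [this, div_le_iff₀ hs0]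
  calc |f (p.1 + p.2 • v) - f p.1| ≤ K * (p.2 * ‖v‖) := hlip
  _ = K * ‖v‖ * p.2 := by ring

lemma dq_bdd_le (f : E → ℝ) (hf : LocallyLipschitz f) (x v : E) :
    IsBoundedUnder (· ≤ ·) (Fx x) (dq f v) := by
  obtain ⟨C, hC⟩ := dq_bound f hf x v
  exact ⟨C, eventually_map.2 (hC.mono fun p hp => le_of_abs_le hp)⟩

lemma dq_bdd_ge (f : E → ℝ) (hf : LocallyLipschitz f) (x v : E) :
    IsBoundedUnder (· ≥ ·) (Fx x) (dq f v) := by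
  obtain ⟨C, hC⟩ := dq_bound f hf x v
  exact ⟨-C, eventually_map.2 (hC.mono fun p hp => neg_le_of_abs_le hp)⟩

lemma dq_cobdd (f : E → ℝ) (hf : LocallyLipschitz f) (x v : E) :
    IsCoboundedUnder (· ≤ ·) (Fx x) (dq f v) :=
  (dq_bdd_ge f hf x v).isCoboundedUnder_le

lemma tendsto_shift (x v : E) :
    Tendsto (fun p : E × ℝ => (p.1 + p.2 • v, p.2)) (Fx x) (Fx x) := by
  unfold Fx
  refine Tendsto.prodMk ?_ tendsto_snd
  have h1 : Tendsto (fun p : E × ℝ => p.1) (𝓝 x ×ˢ 𝓝[>] (0:ℝ)) (𝓝 x) := tendsto_fst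
  have h2 : Tendsto (fun p : E × ℝ => p.2) (𝓝 x ×ˢ 𝓝[>] (0:ℝ)) (𝓝 (0:ℝ)) :=
    tendsto_snd.mono_right nhdsWithin_le_nhds
  have := h1.add ((h2.smul_const v))
  simpa using this

lemma clarkeDir_zero (f : E → ℝ) (x : E) : clarkeDir f x 0 = 0 := by
  rw [clarkeDir_eq]
  have : dq f (0 : E) = fun _ => (0 : ℝ) := by
    funext p; simp [dq]
  rw [this, limsup_const]

lemma clarkeDir_add_le (f : E → ℝ) (hf : LocallyLipschitz f) (x v w : E) :
    clarkeDir f x (v + w) ≤ clarkeDir f x v + clarkeDir f x w := by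
  set φ : E × ℝ → E × ℝ := fun p => (p.1 + p.2 • v, p.2) with hφdef
  have key : dq f (v + w) = dq f v + (dq f w) ∘ φ := by
    funext p
    show (f (p.1 + p.2 • (v + w)) - f p.1) / p.2
      = (f (p.1 + p.2 • v) - f p.1) / p.2
        + (f ((p.1 + p.2 • v) + p.2 • w) - f (p.1 + p.2 • v)) / p.2
    rw [← add_div, smul_add, ← add_assoc]
    ring_nf
  have hφ : Tendsto φ (Fx x) (Fx x) := tendsto_shift x v
  have h1 := dq_bdd_ge f hf x v
  have h2 := dq_bdd_le f hf x v
  have h3 : IsBoundedUnder (· ≤ ·) (Fx x) (dq f w ∘ φ) := by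
    obtain ⟨C, hC⟩ := dq_bdd_le f hf x w
    rw [eventually_map] at hC
    exact ⟨C, eventually_map.2 (hφ.eventually hC)⟩
  have h3' : IsBoundedUnder (· ≥ ·) (Fx x) (dq f w ∘ φ) := by
    obtain ⟨C, hC⟩ := dq_bdd_ge f hf x w
    rw [eventually_map] at hC
    exact ⟨C, eventually_map.2 (hφ.eventually hC)⟩
  have h3co : IsCoboundedUnder (· ≤ ·) (Fx x) (dq f w ∘ φ) := h3'.isCoboundedUnder_le
  rw [clarkeDir_eq, key]
  calc limsup (dq f v + dq f w ∘ φ) (Fx x)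
      ≤ limsup (dq f v) (Fx x) + limsup (dq f w ∘ φ) (Fx x) :=
        limsup_add_le h1 h2 h3co h3
  _ ≤ clarkeDir f x v + clarkeDir f x w := by
      apply add_le_add le_rfl
      rw [limsup_comp, clarkeDir_eq]
      refine limsup_le_limsup_of_le hφ ?_ (dq_bdd_le f hf x w)
      · show IsCobounded _ (map (dq f w) (map φ (Fx x)))
        rw [map_map]
        exact h3co

lemma map_mul_nhdsGT {c : ℝ} (hc : 0 < c) :
    map (fun t : ℝ => c * t) (𝓝[>] (0 : ℝ)) = 𝓝[>] (0 : ℝ) := by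
  have h : ∀ a : ℝ, 0 < a →
      Tendsto (fun t : ℝ => a * t) (𝓝[>] (0:ℝ)) (𝓝[>] (0:ℝ)) := by
    intro a ha
    apply tendsto_nhdsWithin_of_tendsto_nhds_of_eventually_within
    · have : Tendsto (fun t : ℝ => a * t) (𝓝 (0:ℝ)) (𝓝 (a * 0)) :=
        (continuous_const.mul continuous_id).tendsto 0
      simpa using this.mono_left nhdsWithin_le_nhds
    · filter_upwards [self_mem_nhdsWithin] with t ht
      exact mul_pos ha ht
  refine le_antisymm (h c hc) ?_
  have h2 := h c⁻¹ (by positivity)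
  calc 𝓝[>] (0:ℝ) = map (fun t : ℝ => c * t) (map (fun t : ℝ => c⁻¹ * t) (𝓝[>] (0:ℝ))) := by
        rw [map_map]
        have : ((fun t : ℝ => c * t) ∘ fun t : ℝ => c⁻¹ * t) = id := by
          funext t; simp [Function.comp, ← mul_assoc, mul_inv_cancel₀ hc.ne']
        rw [this, map_id]
  _ ≤ map (fun t : ℝ => c * t) (𝓝[>] (0:ℝ)) := map_mono h2

lemma map_psi (x : E) {c : ℝ} (hc : 0 < c) :
    map (fun p : E × ℝ => (p.1, c * p.2)) (Fx x) = Fx x := by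
  unfold Fx
  have h := prod_map_map_eq (f₁ := 𝓝 x) (f₂ := 𝓝[>] (0:ℝ)) (m₁ := (id : E → E))
    (m₂ := fun t : ℝ => c * t)
  rw [map_id, map_mul_nhdsGT hc] at h
  exact h.symm

lemma clarkeDir_smul (f : E → ℝ) (hf : LocallyLipschitz f) (x v : E) {c : ℝ} (hc : 0 < c) :
    clarkeDir f x (c • v) = c * clarkeDir f x v := by
  set ψ : E × ℝ → E × ℝ := fun p => (p.1, c * p.2) with hψdef
  have key : dq f (c • v) = (fun p => c * dq f v p) ∘ ψ := by
    funext p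
    show (f (p.1 + p.2 • c • v) - f p.1) / p.2
      = c * ((f (p.1 + (c * p.2) • v) - f p.1) / (c * p.2))
    have h2 : p.2 • c • v = (c * p.2) • v := by rw [smul_smul, mul_comm]
    rw [h2]
    rcases eq_or_ne p.2 0 with h | h
    · simp [h]
    · field_simp
  rw [clarkeDir_eq, key, limsup_comp, map_psi x hc, clarkeDir_eq]
  have hle := dq_bdd_le f hf x v
  have hge := dq_bdd_ge f hf x v
  have hco := dq_cobdd f hf x v
  have hle' : IsBoundedUnder (· ≤ ·) (Fx x) (fun p => c * dq f v p) := by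
    obtain ⟨C, hC⟩ := hle
    rw [eventually_map] at hC
    exact ⟨c * C, eventually_map.2 (by
      filter_upwards [hC] with p hp; exact mul_le_mul_of_nonneg_left hp hc.le)⟩
  have hge' : IsBoundedUnder (· ≥ ·) (Fx x) (fun p => c * dq f v p) := by
    obtain ⟨C, hC⟩ := hge
    rw [eventually_map] at hC
    exact ⟨c * C, eventually_map.2 (by
      filter_upwards [hC] with p hp; exact mul_le_mul_of_nonneg_left hp hc.le)⟩
  have hco' : IsCoboundedUnder (· ≤ ·) (Fx x) (fun p => c * dq f v p) :=
    hge'.isCoboundedUnder_le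
  exact ((OrderIso.mulLeft₀ c hc).limsup_apply hle hco hle' hco').symm

lemma exists_clarke_elt [CompleteSpace E] [FiniteDimensional ℝ E]
    (f : E → ℝ) (hf : LocallyLipschitz f) (y v : E) (hv : v ≠ 0) :
    ∃ ξ ∈ clarkeSubdiff f y, ⟪ξ, v⟫ = clarkeDir f y v := by
  set N : E → ℝ := clarkeDir f y with hN
  have N_hom : ∀ c : ℝ, 0 < c → ∀ z, N (c • z) = c * N z := fun c hc z =>
    clarkeDir_smul f hf y z hc
  have N_add : ∀ z w, N (z + w) ≤ N z + N w := fun z w =>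
    clarkeDir_add_le f hf y z w
  set g : E →ₗ.[ℝ] ℝ := LinearPMap.mkSpanSingleton' v (N v)
    (fun c hc => by
      have : c = 0 := by
        by_contra h
        exact hv (by simpa [smul_eq_zero, h] using hc)
      simp [this]) with hg
  have hdom : g.domain = (ℝ ∙ v) := LinearPMap.domain_mkSpanSingleton v (N v) _
  have hgle : ∀ z : g.domain, g z ≤ N z := by
    rintro ⟨z, hz⟩
    rw [hdom] at hz
    obtain ⟨c, rfl⟩ := Submodule.mem_span_singleton.1 hz
    have happ : g ⟨c • v, hz⟩ = c • N v := LinearPMap.mkSpanSingleton'_apply v (N v) _ c _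
    rw [happ]
    rcases lt_trichotomy c 0 with hc | hc | hc
    · have h0 : N 0 = 0 := clarkeDir_zero f y
      have : (0 : ℝ) ≤ N (c • v) + N (-(c • v)) := by
        have := N_add (c • v) (-(c • v))
        simpa [h0] using this
      have hneg : N (-(c • v)) = (-c) * N v := by
        have : -(c • v) = (-c) • v := by simp
        rw [this, N_hom (-c) (by linarith) v]
      rw [hneg] at this
      simp only [smul_eq_mul]
      linarith
    · subst hc
      simp [clarkeDir_zero f y, N]
    · rw [N_hom c hc v]; simp
  obtain ⟨φ, hφ1, hφ2⟩ := exists_extension_of_le_sublinear g N N_hom N_add hgle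
  have hvmem : v ∈ g.domain := by rw [hdom]; exact Submodule.mem_span_singleton_self v
  have hφv : φ v = N v := by
    have := hφ1 ⟨v, hvmem⟩
    rw [this]
    exact LinearPMap.mkSpanSingleton'_apply_self v (N v) _ _
  set φ' : E →L[ℝ] ℝ := LinearMap.toContinuousLinearMap φ with hφ'
  set ξ : E := (InnerProductSpace.toDual ℝ E).symm φ' with hξ
  have hinner : ∀ w, ⟪ξ, w⟫ = φ w := fun w =>
    InnerProductSpace.toDual_symm_apply
  refine ⟨ξ, fun w => ?_, by rw [hinner v, hφv]⟩
  rw [hinner w]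
  exact hφ2 w

lemma min_norm_inner {S : Set E} (hconv : Convex ℝ S) {v : E} (hv : -v ∈ S)
    (hmin : ∀ ξ ∈ S, ‖-v‖ ≤ ‖ξ‖) : ∀ ξ ∈ S, ⟪ξ, v⟫ ≤ -‖v‖ ^ 2 := by
  intro ξ hξ
  have key : ∀ l ∈ Ioc (0:ℝ) 1, 0 ≤ 2 * ⟪-v, ξ + v⟫ + l * ‖ξ + v‖ ^ 2 := by
    intro l hl
    have hz : (1 - l) • (-v) + l • ξ ∈ S :=
      hconv hv hξ (by linarith [hl.2]) hl.1.le (by ring)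
    have hle := hmin _ hz
    have hrw : (1 - l) • (-v) + l • ξ = -v + l • (ξ + v) := by
      rw [smul_add]; module
    rw [hrw] at hle
    have hsq : ‖-v + l • (ξ + v)‖ ^ 2
        = ‖-v‖ ^ 2 + 2 * (l * ⟪-v, ξ + v⟫) + l ^ 2 * ‖ξ + v‖ ^ 2 := by
      rw [norm_add_sq_real, real_inner_smul_right, norm_smul, Real.norm_eq_abs,
        abs_of_pos hl.1, mul_pow]
    have hle2 : ‖-v‖ ^ 2 ≤ ‖-v + l • (ξ + v)‖ ^ 2 := by
      apply sq_le_sq' <;> nlinarith [norm_nonneg (-v + l • (ξ + v)), norm_nonneg (-v)]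
    rw [hsq] at hle2
    have hl0 := hl.1
    nlinarith
  have h0 : 0 ≤ 2 * ⟪-v, ξ + v⟫ := by
    by_contra h
    push_neg at h
    set B := 2 * ⟪-v, ξ + v⟫ with hB
    set A := ‖ξ + v‖ ^ 2 with hA
    have hA0 : 0 ≤ A := by positivity
    set l : ℝ := min 1 (-B / (2 * (A + 1))) with hldef
    have hl1 : l ≤ 1 := min_le_left _ _
    have hl0 : 0 < l := lt_min one_pos (div_pos (by linarith) (by positivity))
    have hkey := key l ⟨hl0, hl1⟩
    have hlA : l * A ≤ -B / 2 := by
      have h1 : l ≤ -B / (2 * (A + 1)) := min_le_right _ _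
      have h2 : l * A ≤ (-B / (2 * (A + 1))) * A := mul_le_mul_of_nonneg_right h1 hA0
      have h3 : (-B / (2 * (A + 1))) * A ≤ -B / 2 := by
        rw [div_mul_eq_mul_div, div_le_div_iff₀ (by positivity) (by norm_num)]
        nlinarith
      linarith
    linarith
  have hexp : ⟪-v, ξ + v⟫ = -⟪ξ, v⟫ - ‖v‖ ^ 2 := by
    rw [inner_neg_left, inner_add_right, real_inner_self_eq_norm_sq, real_inner_comm]
    ring
  rw [hexp] at h0
  linarith

lemma descent (f : E → ℝ) (hf : LocallyLipschitz f) (x₀ v : E) (T c : ℝ) (hT : 0 ≤ T)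
    (hc : ∀ t ∈ Icc 0 T, clarkeDir f (x₀ + t • v) v ≤ c) :
    f (x₀ + T • v) ≤ f x₀ + c * T := by
  have hcont : Continuous f := hf.continuous
  have main : ∀ δ : ℝ, 0 < δ → f (x₀ + T • v) ≤ f x₀ + (c + δ) * T := by
    intro δ hδ
    set S : Set ℝ := {t | t ∈ Icc 0 T ∧ f (x₀ + t • v) ≤ f x₀ + (c + δ) * t} with hSdef
    have h0S : (0 : ℝ) ∈ S := by
      constructor
      · exact ⟨le_refl 0, hT⟩
      · simp
    have hSne : S.Nonempty := ⟨0, h0S⟩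
    have hSbdd : BddAbove S := ⟨T, fun t ht => ht.1.2⟩
    have hSclosed : IsClosed S := by
      have h1 : IsClosed (Icc (0:ℝ) T) := isClosed_Icc
      have h2 : IsClosed {t : ℝ | f (x₀ + t • v) ≤ f x₀ + (c + δ) * t} := by
        apply isClosed_le
        · exact hcont.comp (continuous_const.add (continuous_id.smul continuous_const))
        · continuity
      exact h1.inter h2
    set s := sSup S with hs
    have hsS : s ∈ S := hSclosed.csSup_mem hSne hSbdd
    have hsIcc := hsS.1
    by_cases hsT : s = T
    · have := hsS.2
      rw [hsT] at this
      exact this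
    · exfalso
      have hsltT : s < T := lt_of_le_of_ne hsIcc.2 hsT
      have hdir : clarkeDir f (x₀ + s • v) v ≤ c := hc s hsIcc
      have hlt : clarkeDir f (x₀ + s • v) v < c + δ := by linarith
      rw [clarkeDir_eq] at hlt
      have hbdd := dq_bdd_le f hf (x₀ + s • v) v
      have hev : ∀ᶠ p in Fx (x₀ + s • v), dq f v p < c + δ :=
        eventually_lt_of_limsup_lt hlt hbdd
      have hm : Tendsto (fun q : ℝ => (x₀ + s • v, q)) (𝓝[>] (0:ℝ)) (Fx (x₀ + s • v)) :=
        Tendsto.prodMk tendsto_const_nhds tendsto_id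
      have hev2 : ∀ᶠ q : ℝ in 𝓝[>] (0:ℝ), dq f v (x₀ + s • v, q) < c + δ :=
        hm.eventually hev
      have hIoo : ∀ᶠ q : ℝ in 𝓝[>] (0:ℝ), q ∈ Ioo 0 (T - s) :=
        Ioo_mem_nhdsGT_of_mem ⟨le_refl 0, by linarith⟩
      obtain ⟨t, ht1, ht2⟩ := (hev2.and hIoo).exists
      have ht0 : 0 < t := ht2.1
      have htT : t < T - s := ht2.2
      have hquot : f ((x₀ + s • v) + t • v) - f (x₀ + s • v) < (c + δ) * t := by
        have := ht1
        rw [dq] at this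
        simp only at this
        calc f ((x₀ + s • v) + t • v) - f (x₀ + s • v)
            = (f ((x₀ + s • v) + t • v) - f (x₀ + s • v)) / t * t := by
              field_simp
        _ < (c + δ) * t := by
              apply mul_lt_mul_of_pos_right _ ht0
              exact this
      have hrw : (x₀ + s • v) + t • v = x₀ + (s + t) • v := by
        rw [add_smul]; abel
      have hmemS : s + t ∈ S := by
        refine ⟨⟨by linarith [hsIcc.1], by linarith⟩, ?_⟩
        rw [← hrw]
        have hsle := hsS.2
        have : (c + δ) * (s + t) = (c + δ) * s + (c + δ) * t := by ring
        rw [this]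
        linarith
      have : s + t ≤ s := le_csSup hSbdd hmemS
      linarith
  by_cases hT0 : T = 0
  · subst hT0; simp
  · have hTpos : 0 < T := lt_of_le_of_ne hT (Ne.symm hT0)
    by_contra h
    push_neg at h
    set δ := (f (x₀ + T • v) - (f x₀ + c * T)) / (2 * T) with hδdef
    have hδpos : 0 < δ := by
      apply div_pos; linarith; positivity
    have := main δ hδpos
    rw [hδdef] at this
    have h2 : (c + (f (x₀ + T • v) - (f x₀ + c * T)) / (2 * T)) * T
        = c * T + (f (x₀ + T • v) - (f x₀ + c * T)) / 2 := by
      field_simp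
    rw [h2] at this
    linarith

end ClarkeAux

theorem stmt2 {n : ℕ} (f : EuclideanSpace ℝ (Fin n) → ℝ) (hf : LocallyLipschitz f)
    (ε : ℝ) (hε : 0 < ε) (x₀ vbar : EuclideanSpace ℝ (Fin n))
    (hmem : -vbar ∈ goldsteinSubdiff f ε x₀)
    (hmin : ∀ ξ ∈ goldsteinSubdiff f ε x₀, ‖-vbar‖ ≤ ‖ξ‖)
    (hne : vbar ≠ 0) :
    f (x₀ + (ε / ‖vbar‖) • vbar) ≤ f x₀ - ε * ‖vbar‖ := by
  open ClarkeAux in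
  have hnv : 0 < ‖vbar‖ := norm_pos_iff.2 hne
  set T : ℝ := ε / ‖vbar‖ with hT
  have hTpos : 0 < T := div_pos hε hnv
  have hgconv : Convex ℝ (goldsteinSubdiff f ε x₀) := convex_convexHull ℝ _
  have hinner : ∀ ξ ∈ goldsteinSubdiff f ε x₀, ⟪ξ, vbar⟫ ≤ -‖vbar‖ ^ 2 :=
    ClarkeAux.min_norm_inner hgconv hmem hmin
  have hdir : ∀ t ∈ Icc (0:ℝ) T, clarkeDir f (x₀ + t • vbar) vbar ≤ -‖vbar‖ ^ 2 := by
    intro t ht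
    set y := x₀ + t • vbar with hy
    have hyball : y ∈ Metric.closedBall x₀ ε := by
      rw [Metric.mem_closedBall, dist_eq_norm]
      have : y - x₀ = t • vbar := by rw [hy]; abel
      rw [this, norm_smul, Real.norm_eq_abs, abs_of_nonneg ht.1]
      calc t * ‖vbar‖ ≤ T * ‖vbar‖ := mul_le_mul_of_nonneg_right ht.2 hnv.le
      _ = ε := by rw [hT]; field_simp
    obtain ⟨ξ, hξmem, hξeq⟩ := ClarkeAux.exists_clarke_elt f hf y vbar hne
    have hξg : ξ ∈ goldsteinSubdiff f ε x₀ :=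
      subset_convexHull ℝ _ (Set.mem_biUnion hyball hξmem)
    rw [← hξeq]
    exact hinner ξ hξg
  have := ClarkeAux.descent f hf x₀ vbar T (-‖vbar‖ ^ 2) hTpos.le hdir
  calc f (x₀ + T • vbar) ≤ f x₀ + -‖vbar‖ ^ 2 * T := this
  _ = f x₀ - ε * ‖vbar‖ := by
      rw [hT]
      field_simp
      ring
end

section
/- Let h : ℝ → ℝ be continuous and let (a_j), (b_j), (t_j) be generated by the bisection of the previous statement (a₁=0, b₁=T>0, h(a₁) < h(b₁), bisect toward the subinterval preserving h(a) < h(b)). Let t̄ be the common limit of the sequences. Then t_j < t̄ for infinitely many j ∈ ℕ. -/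
open Filter Set Topology

def BisectStep (h : ℝ → ℝ) (a b : ℕ → ℝ) : Prop :=
  ∀ j, (h (b j) > h ((a j + b j) / 2) →
          a (j + 1) = (a j + b j) / 2 ∧ b (j + 1) = b j) ∧
       (¬ h (b j) > h ((a j + b j) / 2) →
          a (j + 1) = a j ∧ b (j + 1) = (a j + b j) / 2)

theorem stmt6 (h : ℝ → ℝ) (hcont : Continuous h) (T : ℝ) (hT : 0 < T)
    (a b : ℕ → ℝ) (ha0 : a 0 = 0) (hb0 : b 0 = T)
    (hinit : h (a 0) < h (b 0)) (hstep : BisectStep h a b)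
    (tbar : ℝ) (hlim : Tendsto (fun j => (a j + b j) / 2) atTop (𝓝 tbar)) :
    {j : ℕ | (a j + b j) / 2 < tbar}.Infinite := by
  by_contra hfin
  rw [Set.not_infinite] at hfin
  obtain ⟨N, hN⟩ := hfin.bddAbove
  have hNall : ∀ j, N + 1 ≤ j → tbar ≤ (a j + b j) / 2 := by
    intro j hj
    by_contra hlt
    push_neg at hlt
    have := hN (Set.mem_setOf.mpr hlt)
    omega
  -- width of interval
  have hd : ∀ j, b j - a j = T / 2 ^ j := by
    intro j
    induction j with
    | zero => simp [ha0, hb0]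
    | succ n ih =>
      rcases lt_or_ge (h ((a n + b n) / 2)) (h (b n)) with hc | hc
      · obtain ⟨h1, h2⟩ := (hstep n).1 hc
        rw [h1, h2, pow_succ]
        field_simp at ih ⊢
        linarith
      · obtain ⟨h1, h2⟩ := (hstep n).2 (not_lt.mpr hc)
        rw [h1, h2, pow_succ]
        field_simp at ih ⊢
        linarith
  have hab : ∀ j, a j < b j := by
    intro j
    have : (0:ℝ) < T / 2 ^ j := by positivity
    linarith [hd j]
  -- monotonicity of a
  have hamono : Monotone a := by
    apply monotone_nat_of_le_succ
    intro j
    rcases lt_or_ge (h ((a j + b j) / 2)) (h (b j)) with hc | hc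
    · rw [((hstep j).1 hc).1]; linarith [hab j]
    · rw [((hstep j).2 (not_lt.mpr hc)).1]
  -- invariant
  have hinv : ∀ j, h (a j) < h (b j) := by
    intro j
    induction j with
    | zero => exact hinit
    | succ n ih =>
      rcases lt_or_ge (h ((a n + b n) / 2)) (h (b n)) with hc | hc
      · obtain ⟨h1, h2⟩ := (hstep n).1 hc
        rw [h1, h2]; exact hc
      · obtain ⟨h1, h2⟩ := (hstep n).2 (not_lt.mpr hc)
        rw [h1, h2]; exact lt_of_lt_of_le ih hc
  -- widths tend to zero
  have hd0 : Tendsto (fun j => b j - a j) atTop (𝓝 0) := by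
    have : Tendsto (fun j : ℕ => T * (1/2 : ℝ) ^ j) atTop (𝓝 (T * 0)) :=
      (tendsto_pow_atTop_nhds_zero_of_lt_one (by norm_num) (by norm_num)).const_mul T
    rw [mul_zero] at this
    refine this.congr fun j => ?_
    rw [hd j]
    field_simp
    rw [← mul_pow]; norm_num
  -- a and b tend to tbar
  have ha_lim : Tendsto a atTop (𝓝 tbar) := by
    have := hlim.sub (hd0.div_const 2)
    norm_num at this
    refine this.congr fun j => ?_
    ring
  have hb_lim : Tendsto b atTop (𝓝 tbar) := by
    have := hlim.add (hd0.div_const 2)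
    norm_num at this
    refine this.congr fun j => ?_
    ring
  have ha_le : ∀ j, a j ≤ tbar := fun j => hamono.ge_of_tendsto ha_lim j
  -- h ∘ b is monotone from N+1 on
  have hbstep : ∀ j, N + 1 ≤ j → h (b j) ≤ h (b (j + 1)) := by
    intro j hj
    rcases lt_or_ge (h ((a j + b j) / 2)) (h (b j)) with hc | hc
    · rw [((hstep j).1 hc).2]
    · rw [((hstep j).2 (not_lt.mpr hc)).2]; exact hc
  have hbchain : ∀ j k, N + 1 ≤ j → j ≤ k → h (b j) ≤ h (b k) := by
    intro j k hj hjk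
    induction k with
    | zero => omega
    | succ n ih =>
      rcases Nat.lt_or_ge j (n + 1) with hlt | hge
      · exact le_trans (ih (by omega)) (hbstep n (by omega))
      · have : j = n + 1 := by omega
        rw [this]
  have hhb_lim : Tendsto (fun j => h (b j)) atTop (𝓝 (h tbar)) :=
    (hcont.tendsto tbar).comp hb_lim
  have hble : ∀ j, N + 1 ≤ j → h (b j) ≤ h tbar := by
    intro j hj
    refine ge_of_tendsto hhb_lim ?_
    filter_upwards [eventually_ge_atTop j] with k hk
    exact hbchain j k hj hk
  by_cases hA : ∃ j, N + 1 ≤ j ∧ h ((a j + b j) / 2) < h (b j)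
  · obtain ⟨j, hj, hc⟩ := hA
    obtain ⟨h1, h2⟩ := (hstep j).1 hc
    have h3 : a (j + 1) = tbar :=
      le_antisymm (ha_le (j + 1)) (by rw [h1]; exact hNall j hj)
    have h4 := hinv (j + 1)
    have h5 := hble (j + 1) (by omega)
    rw [h3] at h4
    linarith
  · push_neg at hA
    have haconst : ∀ k, N + 1 ≤ k → a k = a (N + 1) := by
      intro k hk
      induction k with
      | zero => omega
      | succ n ih =>
        rcases Nat.lt_or_ge (N + 1) (n + 1) with hlt | hge
        · have hn : N + 1 ≤ n := by omega
          rw [((hstep n).2 (not_lt.mpr (hA n hn))).1]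
          exact ih hn
        · have : N + 1 = n + 1 := by omega
          rw [this]
    have h6 : a (N + 1) = tbar := by
      refine tendsto_nhds_unique ?_ ha_lim
      refine Tendsto.congr' ?_ tendsto_const_nhds
      filter_upwards [eventually_ge_atTop (N + 1)] with k hk
      exact (haconst k hk).symm
    have h7 := hinv (N + 1)
    have h8 := hble (N + 1) le_rfl
    rw [h6] at h7
    linarith
end

section
/- Let h : ℝ → ℝ be continuous, and let (a_j),(b_j),(t_j) be generated by the bisection with a₁=0, b₁=T>0, h(a₁)<h(b₁), converging to the common limit t̄. Let (j_i) enumerate the indices with t_{j_i} < t̄. Then for all i, (h(t_{j_i}) - h(t̄))/(t̄ - t_{j_i}) < 0; in particular, liminf_{s↘0} (h(t̄ - s) - h(t̄))/s ≤ 0. -/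
open Filter Set Topology

theorem stmt7 (h : ℝ → ℝ) (hcont : Continuous h) (T : ℝ) (hT : 0 < T)
    (a b : ℕ → ℝ) (ha0 : a 0 = 0) (hb0 : b 0 = T)
    (hinit : h (a 0) < h (b 0)) (hstep : BisectStep h a b)
    (tbar : ℝ) (hlim : Tendsto (fun j => (a j + b j) / 2) atTop (𝓝 tbar)) :
    (∀ j, (a j + b j) / 2 < tbar →
        (h ((a j + b j) / 2) - h tbar) / (tbar - (a j + b j) / 2) < 0) ∧
    Filter.liminf (fun s : ℝ => (h (tbar - s) - h tbar) / s)
      (nhdsWithin 0 (Set.Ioi 0)) ≤ 0 := by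
  set t : ℕ → ℝ := fun j => (a j + b j) / 2 with ht
  -- width
  have hwidth : ∀ j, b j - a j = T / 2 ^ j := by
    intro j
    induction j with
    | zero => simp [ha0, hb0]
    | succ j ih =>
      rcases le_or_gt (h (b j)) (h (t j)) with hc | hc
      · obtain ⟨h1, h2⟩ := (hstep j).2 (not_lt.mpr hc)
        rw [h1, h2, pow_succ, div_mul_eq_div_div, ← ih]; ring
      · obtain ⟨h1, h2⟩ := (hstep j).1 hc
        rw [h1, h2, pow_succ, div_mul_eq_div_div, ← ih]; ring
  have hlt : ∀ j, a j < b j := by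
    intro j
    have := hwidth j
    have hpos : (0:ℝ) < T / 2 ^ j := by positivity
    linarith
  -- monotonicity of a, b
  have hastep : ∀ j, a j ≤ a (j + 1) := by
    intro j
    rcases le_or_gt (h (b j)) (h (t j)) with hc | hc
    · rw [((hstep j).2 (not_lt.mpr hc)).1]
    · rw [((hstep j).1 hc).1]; have := hlt j; show a j ≤ (a j + b j)/2; linarith
  have hbstep : ∀ j, b (j + 1) ≤ b j := by
    intro j
    rcases le_or_gt (h (b j)) (h (t j)) with hc | hc
    · rw [((hstep j).2 (not_lt.mpr hc)).2]; have := hlt j; show (a j + b j)/2 ≤ b j; linarith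
    · rw [((hstep j).1 hc).2]
  have hamono : Monotone a := monotone_nat_of_le_succ hastep
  have hbanti : Antitone b := antitone_nat_of_succ_le hbstep
  -- h b monotone
  have hhb : Monotone (fun j => h (b j)) := by
    apply monotone_nat_of_le_succ
    intro j
    rcases le_or_gt (h (b j)) (h (t j)) with hc | hc
    · rw [((hstep j).2 (not_lt.mpr hc)).2]; exact hc
    · rw [((hstep j).1 hc).2]
  -- invariant h a < h b
  have hab : ∀ j, h (a j) < h (b j) := by
    intro j
    induction j with
    | zero => exact hinit
    | succ j ih =>
      rcases le_or_gt (h (b j)) (h (t j)) with hc | hc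
      · obtain ⟨h1, h2⟩ := (hstep j).2 (not_lt.mpr hc)
        rw [h1, h2]; exact lt_of_lt_of_le ih hc
      · obtain ⟨h1, h2⟩ := (hstep j).1 hc
        rw [h1, h2]; exact hc
  -- widths tend to 0
  have hwtend : Tendsto (fun j => b j - a j) atTop (𝓝 0) := by
    have : Tendsto (fun j : ℕ => T * (1/2 : ℝ) ^ j) atTop (𝓝 (T * 0)) :=
      (tendsto_pow_atTop_nhds_zero_of_lt_one (by norm_num) (by norm_num)).const_mul T
    simp only [mul_zero] at this
    refine this.congr (fun j => ?_)
    rw [hwidth j]; field_simp; rw [← mul_pow]; norm_num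
  -- a, b tend to tbar
  have hatend : Tendsto a atTop (𝓝 tbar) := by
    have : Tendsto (fun j => t j - (b j - a j) / 2) atTop (𝓝 (tbar - 0 / 2)) :=
      hlim.sub (hwtend.div_const 2)
    simp only [zero_div, sub_zero] at this
    refine this.congr (fun j => ?_)
    simp only [ht]; ring
  have hbtend : Tendsto b atTop (𝓝 tbar) := by
    have : Tendsto (fun j => t j + (b j - a j) / 2) atTop (𝓝 (tbar + 0 / 2)) :=
      hlim.add (hwtend.div_const 2)
    simp only [zero_div, add_zero] at this
    refine this.congr (fun j => ?_)
    simp only [ht]; ring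
  have hale : ∀ j, a j ≤ tbar := hamono.ge_of_tendsto hatend
  have hble : ∀ j, tbar ≤ b j := hbanti.le_of_tendsto hbtend
  -- h(b j) ≤ h tbar
  have hhbtend : Tendsto (fun j => h (b j)) atTop (𝓝 (h tbar)) :=
    (hcont.tendsto tbar).comp hbtend
  have hhble : ∀ j, h (b j) ≤ h tbar := hhb.ge_of_tendsto hhbtend
  -- key lemma A
  have keyA : ∀ j, t j < tbar → h (t j) < h tbar := by
    intro j htj
    rcases le_or_gt (h (b j)) (h (t j)) with hc | hc
    · exfalso
      have h2 := ((hstep j).2 (not_lt.mpr hc)).2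
      have h3 := hble (j + 1)
      rw [h2] at h3
      have htj' : (a j + b j) / 2 < tbar := htj
      linarith
    · exact lt_of_lt_of_le hc (hhble j)
  -- key lemma B : arbitrarily late midpoints below tbar
  have keyB : ∀ J : ℕ, ∃ j, J ≤ j ∧ t j < tbar := by
    intro J
    by_contra hcon
    push_neg at hcon
    -- all steps from J on are b-updates, a stays constant
    have haconst : ∀ k, a (J + k) = a J := by
      intro k
      induction k with
      | zero => rfl
      | succ k ih =>
        have hJk : tbar ≤ t (J + k) := hcon (J + k) (Nat.le_add_right J k)
        rcases le_or_gt (h (b (J + k))) (h (t (J + k))) with hc | hc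
        · have h1 := ((hstep (J + k)).2 (not_lt.mpr hc)).1
          show a ((J + k) + 1) = a J
          rw [h1, ih]
        · exfalso
          have h1 := ((hstep (J + k)).1 hc).1
          have hle1 : a ((J + k) + 1) ≤ tbar := hale _
          rw [h1] at hle1
          have hteq : t (J + k) = tbar := le_antisymm hle1 hJk
          have := hhble (J + k)
          rw [← hteq] at this
          linarith
    have haJ : a J = tbar := by
      have hev : ∀ᶠ j in atTop, a j = a J := by
        filter_upwards [eventually_ge_atTop J] with j hj
        have := haconst (j - J)
        rwa [Nat.add_sub_cancel' hj] at this
      have : Tendsto a atTop (𝓝 (a J)) :=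
        Tendsto.congr' (hev.mono fun j hj => hj.symm) tendsto_const_nhds
      exact tendsto_nhds_unique this hatend
    have h1 := hab J
    have h2 := hhble J
    rw [haJ] at h1
    linarith
  constructor
  · intro j htj
    apply div_neg_of_neg_of_pos
    · have := keyA j htj; linarith
    · linarith
  · -- liminf ≤ 0
    rw [Filter.liminf_eq]
    apply Real.sSup_le _ le_rfl
    intro c hc
    simp only [Set.mem_setOf_eq] at hc
    by_contra hc0
    push_neg at hc0
    rw [eventually_iff, Metric.mem_nhdsWithin_iff] at hc
    obtain ⟨ε, hε, hball⟩ := hc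
    -- find j with t j < tbar and tbar - t j < ε
    have htt : Tendsto t atTop (𝓝 tbar) := hlim
    rw [Metric.tendsto_atTop] at htt
    obtain ⟨J, hJ⟩ := htt ε hε
    obtain ⟨j, hjJ, hjt⟩ := keyB J
    set s := tbar - t j with hs
    have hs0 : 0 < s := by simp only [hs]; linarith
    have hsε : dist s 0 < ε := by
      have := hJ j hjJ
      rw [Real.dist_eq] at this ⊢
      simp only [hs, sub_zero]
      rw [abs_of_pos hs0]
      rw [abs_sub_comm] at this
      calc tbar - t j ≤ |tbar - t j| := le_abs_self _
        _ < ε := this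
    have hcle : c ≤ (h (tbar - s) - h tbar) / s :=
      hball ⟨Metric.mem_ball.mpr hsε, hs0⟩
    have hneg : (h (tbar - s) - h tbar) / s < 0 := by
      have heq : tbar - s = t j := by rw [hs]; ring
      rw [heq]
      apply div_neg_of_neg_of_pos
      · have := keyA j hjt; linarith
      · exact hs0
    linarith
end

section
/- Let f : ℝⁿ → ℝ be locally Lipschitz, x₀, ṽ ∈ ℝⁿ with ṽ ≠ 0, c̃ ∈ ℝ, and define h_c̃(t) := f(x₀ + t ṽ) - f(x₀) + c̃ t ‖ṽ‖². Suppose the bisection sequences (a_j),(b_j),(t_j) (a₁=0, b₁=ε/‖ṽ‖, h_c̃(a₁) < h_c̃(b₁), bisect preserving h_c̃(a) < h_c̃(b)) converge to t̄. Then liminf_{s↘0} (f(x₀ + t̄ṽ - sṽ) - f(x₀ + t̄ṽ))/s ≤ c̃ ‖ṽ‖². -/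
open Filter Set Topology RealInnerProductSpace

theorem stmt8 {n : ℕ} (f : EuclideanSpace ℝ (Fin n) → ℝ) (hf : LocallyLipschitz f)
    (x₀ vtil : EuclideanSpace ℝ (Fin n)) (hv : vtil ≠ 0) (ctil ε : ℝ) (hε : 0 < ε)
    (a b : ℕ → ℝ) (ha0 : a 0 = 0) (hb0 : b 0 = ε / ‖vtil‖)
    (hinit : (fun t => f (x₀ + t • vtil) - f x₀ + ctil * t * ‖vtil‖^2) (a 0)
           < (fun t => f (x₀ + t • vtil) - f x₀ + ctil * t * ‖vtil‖^2) (b 0))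
    (hstep : BisectStep (fun t => f (x₀ + t • vtil) - f x₀ + ctil * t * ‖vtil‖^2) a b)
    (tbar : ℝ) (hlim : Tendsto (fun j => (a j + b j) / 2) atTop (𝓝 tbar)) :
    Filter.liminf
      (fun s : ℝ => (f (x₀ + tbar • vtil - s • vtil) - f (x₀ + tbar • vtil)) / s)
      (nhdsWithin 0 (Set.Ioi 0)) ≤ ctil * ‖vtil‖^2 := by
  unfold BisectStep at hstep
  set h : ℝ → ℝ := fun t => f (x₀ + t • vtil) - f x₀ + ctil * t * ‖vtil‖^2 with hh
  have hstep' : ∀ j, (h (b j) > h ((a j + b j) / 2) →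
          a (j + 1) = (a j + b j) / 2 ∧ b (j + 1) = b j) ∧
       (¬ h (b j) > h ((a j + b j) / 2) →
          a (j + 1) = a j ∧ b (j + 1) = (a j + b j) / 2) := hstep
  have hinit' : h (a 0) < h (b 0) := hinit
  clear hstep hinit
  rename' hstep' => hstep, hinit' => hinit
  set C := ctil * ‖vtil‖^2 with hC
  have hcont : Continuous h := by
    apply Continuous.add
    · exact (hf.continuous.comp (by continuity)).sub continuous_const
    · continuity
  have inv : ∀ j, h (a j) < h (b j) := by
    intro j
    induction j with
    | zero => exact hinit
    | succ k ih =>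
      rcases le_or_gt (h (b k)) (h ((a k + b k)/2)) with hc | hc
      · obtain ⟨h1, h2⟩ := (hstep k).2 (not_lt.mpr hc)
        rw [h1, h2]; exact lt_of_lt_of_le ih hc
      · obtain ⟨h1, h2⟩ := (hstep k).1 hc
        rw [h1, h2]; exact hc
  have hab : ∀ j, a j < b j := by
    intro j
    induction j with
    | zero =>
      rw [ha0, hb0]
      have : (0:ℝ) < ‖vtil‖ := norm_pos_iff.mpr hv
      positivity
    | succ k ih =>
      rcases le_or_gt (h (b k)) (h ((a k + b k)/2)) with hc | hc
      · obtain ⟨h1, h2⟩ := (hstep k).2 (not_lt.mpr hc)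
        rw [h1, h2]; linarith
      · obtain ⟨h1, h2⟩ := (hstep k).1 hc
        rw [h1, h2]; linarith
  have hdiff : ∀ j, b j - a j = (b 0 - a 0) * (1/2)^j := by
    intro j
    induction j with
    | zero => simp
    | succ k ih =>
      have hstepd : b (k+1) - a (k+1) = (b k - a k) / 2 := by
        rcases le_or_gt (h (b k)) (h ((a k + b k)/2)) with hc | hc
        · obtain ⟨h1, h2⟩ := (hstep k).2 (not_lt.mpr hc); rw [h1, h2]; ring
        · obtain ⟨h1, h2⟩ := (hstep k).1 hc; rw [h1, h2]; ring
      rw [hstepd, ih]; ring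
  have hdiff0 : Tendsto (fun j => b j - a j) atTop (𝓝 0) := by
    have h2 : Tendsto (fun j : ℕ => (b 0 - a 0) * (1/2)^j) atTop (𝓝 0) := by
      have := (tendsto_pow_atTop_nhds_zero_of_lt_one (by norm_num : (0:ℝ) ≤ 1/2)
        (by norm_num : (1:ℝ)/2 < 1)).const_mul (b 0 - a 0)
      simpa using this
    exact h2.congr (fun j => (hdiff j).symm)
  have hatend : Tendsto a atTop (𝓝 tbar) := by
    have hT : Tendsto (fun j => (a j + b j)/2 - (b j - a j)/2) atTop (𝓝 (tbar - 0/2)) :=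
      hlim.sub (hdiff0.div_const 2)
    simp only [zero_div, sub_zero] at hT
    exact hT.congr (fun j => by ring)
  have hbtend : Tendsto b atTop (𝓝 tbar) := by
    have hT : Tendsto (fun j => (a j + b j)/2 + (b j - a j)/2) atTop (𝓝 (tbar + 0/2)) :=
      hlim.add (hdiff0.div_const 2)
    simp only [zero_div, add_zero] at hT
    exact hT.congr (fun j => by ring)
  have hbmono : Monotone (fun j => h (b j)) := by
    apply monotone_nat_of_le_succ
    intro k
    rcases le_or_gt (h (b k)) (h ((a k + b k)/2)) with hc | hc
    · obtain ⟨_, h2⟩ := (hstep k).2 (not_lt.mpr hc); simp only [h2]; exact hc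
    · obtain ⟨_, h2⟩ := (hstep k).1 hc; simp only [h2]; exact le_refl _
  have hamono : Monotone a := by
    apply monotone_nat_of_le_succ
    intro k
    have := hab k
    rcases le_or_gt (h (b k)) (h ((a k + b k)/2)) with hc | hc
    · obtain ⟨h1, _⟩ := (hstep k).2 (not_lt.mpr hc); rw [h1]
    · obtain ⟨h1, _⟩ := (hstep k).1 hc; rw [h1]; linarith
  have hble : ∀ j, h (b j) ≤ h tbar :=
    hbmono.ge_of_tendsto ((hcont.tendsto tbar).comp hbtend)
  have hale : ∀ j, h (a j) < h tbar := fun j => lt_of_lt_of_le (inv j) (hble j)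
  have haletbar : ∀ j, a j ≤ tbar := hamono.ge_of_tendsto hatend
  have halt : ∀ j, a j < tbar := by
    intro j
    rcases lt_or_eq_of_le (haletbar j) with hlt | heq
    · exact hlt
    · exact absurd (hale j) (by rw [heq]; exact lt_irrefl _)
  have hfreq : ∃ᶠ s in 𝓝[>] (0:ℝ),
      (f (x₀ + tbar • vtil - s • vtil) - f (x₀ + tbar • vtil)) / s ≤ C := by
    have hstend : Tendsto (fun j => tbar - a j) atTop (𝓝[>] 0) := by
      apply tendsto_nhdsWithin_of_tendsto_nhds_of_eventually_within
      · have hT := (tendsto_const_nhds (x := tbar) (f := atTop (α := ℕ))).sub hatend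
        simpa using hT
      · exact Eventually.of_forall (fun j => sub_pos.mpr (halt j))
    refine hstend.frequently (Frequently.of_forall ?_)
    intro j
    have hspos : 0 < tbar - a j := sub_pos.mpr (halt j)
    have hxeq : x₀ + tbar • vtil - (tbar - a j) • vtil = x₀ + (a j) • vtil := by
      rw [sub_smul]; abel
    rw [hxeq, div_le_iff₀ hspos]
    have h1 := (hale j).le
    simp only [hh] at h1
    rw [hC]
    nlinarith [h1]
  have hbdd : IsBoundedUnder (· ≥ ·) (𝓝[>] (0:ℝ))
      (fun s : ℝ => (f (x₀ + tbar • vtil - s • vtil) - f (x₀ + tbar • vtil)) / s) := by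
    obtain ⟨K, t, ht, hK⟩ := hf (x₀ + tbar • vtil)
    obtain ⟨r, hr, hball⟩ := Metric.mem_nhds_iff.mp ht
    apply isBoundedUnder_of_eventually_ge (a := -(↑K * ‖vtil‖))
    have hev : ∀ᶠ s in 𝓝[>] (0:ℝ), s ∈ Ioo 0 (r / (‖vtil‖ + 1)) := by
      apply Ioo_mem_nhdsGT_of_mem
      constructor
      · exact le_refl _
      · positivity
    filter_upwards [hev] with s hs
    have hspos : 0 < s := hs.1
    have hv1 : (0:ℝ) < ‖vtil‖ + 1 := by positivity
    have hsr : s * (‖vtil‖ + 1) < r := (lt_div_iff₀ hv1).mp hs.2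
    have hdist : dist (x₀ + tbar • vtil - s • vtil) (x₀ + tbar • vtil) = s * ‖vtil‖ := by
      rw [dist_eq_norm]
      have heq : x₀ + tbar • vtil - s • vtil - (x₀ + tbar • vtil) = -(s • vtil) := by abel
      rw [heq, norm_neg, norm_smul, Real.norm_eq_abs, abs_of_pos hspos]
    have hmem1 : x₀ + tbar • vtil - s • vtil ∈ t := by
      apply hball
      rw [Metric.mem_ball, hdist]
      nlinarith [norm_nonneg vtil]
    have hmem2 : x₀ + tbar • vtil ∈ t := hball (Metric.mem_ball_self hr)
    have hlip := hK.dist_le_mul _ hmem1 _ hmem2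
    rw [Real.dist_eq, hdist] at hlip
    rw [le_div_iff₀ hspos]
    have habs := (abs_le.mp hlip).1
    nlinarith [K.coe_nonneg]
  exact liminf_le_of_frequently_le hfreq hbdd
end

section
/- Let f : ℝⁿ → ℝ be weakly lower semismooth (locally Lipschitz, and for all x, v ∈ ℝⁿ and all sequences s_i ↘ 0, ξ_i ∈ ∂f(x + s_i v): limsup_i ⟨ξ_i, v⟩ ≤ liminf_{s↘0} (f(x+sv)-f(x))/s). Let x₀ ∈ ℝⁿ, ε > 0, c ∈ (0,1), ṽ ≠ 0 with f(x₀ + (ε/‖ṽ‖)ṽ) > f(x₀) - cε‖ṽ‖, and c̃ ∈ (c_min, c) where c_min := -(f(x₀ + (ε/‖ṽ‖)ṽ) - f(x₀))/(ε‖ṽ‖). Then Algorithm 2 (bisection on h_c̃(t) = f(x₀+tṽ) - f(x₀) + c̃t‖ṽ‖², stopping when a sampled subgradient ξ' ∈ ∂f(x₀ + t_j ṽ) satisfies ⟨ξ', ṽ⟩ > -c‖ṽ‖²) terminates after finitely many iterations, for any choice of sampled subgradients ξ' ∈ ∂f(x₀ + t_j ṽ). -/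
open Filter Set Topology RealInnerProductSpace

def WeaklyLowerSemismooth {E : Type*} [NormedAddCommGroup E] [InnerProductSpace ℝ E]
    (f : E → ℝ) : Prop :=
  LocallyLipschitz f ∧
  ∀ (x v : E) (s : ℕ → ℝ) (ξ : ℕ → E),
    (∀ i, 0 < s i) → Tendsto s atTop (𝓝 0) →
    (∀ i, ξ i ∈ clarkeSubdiff f (x + s i • v)) →
    Filter.limsup (fun i => ⟪ξ i, v⟫) atTop ≤
      Filter.liminf (fun t : ℝ => (f (x + t • v) - f x) / t) (nhdsWithin 0 (Set.Ioi 0))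

lemma clarkeDir_le_of_lip {E : Type*} [NormedAddCommGroup E] [InnerProductSpace ℝ E]
    (f : E → ℝ) (K : NNReal) (y v : E) (R : ℝ) (hR : 0 < R)
    (hlip : LipschitzOnWith K f (Metric.ball y R)) :
    clarkeDir f y v ≤ K * ‖v‖ := by
  set δ : ℝ := R / (2 * (‖v‖ + 1)) with hδ
  have hvpos : (0:ℝ) < ‖v‖ + 1 := by positivity
  have hδpos : 0 < δ := by positivity
  have hδeq : δ * (‖v‖ + 1) = R / 2 := by
    rw [hδ]; field_simp
  have hmem : (Metric.ball y (R/2)) ×ˢ (Set.Ioo (0:ℝ) δ) ∈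
      ((nhds y) ×ˢ (nhdsWithin (0:ℝ) (Set.Ioi 0))) :=
    Filter.prod_mem_prod (Metric.ball_mem_nhds y (by linarith))
      (Ioo_mem_nhdsGT_of_mem ⟨le_refl 0, hδpos⟩)
  have key : ∀ p : E × ℝ, p ∈ (Metric.ball y (R/2)) ×ˢ (Set.Ioo (0:ℝ) δ) →
      |(f (p.1 + p.2 • v) - f p.1) / p.2| ≤ K * ‖v‖ := by
    rintro ⟨p1, p2⟩ ⟨h1, h2⟩
    have hp2 : 0 < p2 := h2.1
    have hnorm : ‖p2 • v‖ = p2 * ‖v‖ := by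
      rw [norm_smul, Real.norm_eq_abs, abs_of_pos hp2]
    have hsmall : p2 * ‖v‖ < R / 2 := by
      have h1' : p2 * ‖v‖ ≤ δ * ‖v‖ :=
        mul_le_mul_of_nonneg_right h2.2.le (norm_nonneg v)
      nlinarith [norm_nonneg v]
    have hd : dist (p1 + p2 • v) p1 = p2 * ‖v‖ := by
      rw [dist_eq_norm]; simpa using hnorm
    have h1d : dist p1 y < R/2 := Metric.mem_ball.mp h1
    have hin : p1 + p2 • v ∈ Metric.ball y R := by
      rw [Metric.mem_ball]
      calc dist (p1 + p2 • v) y ≤ dist (p1 + p2 • v) p1 + dist p1 y := dist_triangle _ _ _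
        _ < R/2 + R/2 := by rw [hd]; linarith
        _ = R := by ring
    have h1' : p1 ∈ Metric.ball y R := Metric.ball_subset_ball (by linarith) h1
    have hdf : |f (p1 + p2 • v) - f p1| ≤ K * (p2 * ‖v‖) := by
      have h3 := hlip.dist_le_mul _ hin _ h1'
      rw [Real.dist_eq, hd] at h3
      exact h3
    rw [abs_div, abs_of_pos hp2, div_le_iff₀ hp2]
    calc |f (p1 + p2 • v) - f p1| ≤ K * (p2 * ‖v‖) := hdf
      _ = K * ‖v‖ * p2 := by ring
  have hbdd : Filter.IsBoundedUnder (· ≥ ·) ((nhds y) ×ˢ (nhdsWithin (0:ℝ) (Set.Ioi 0)))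
      (fun p : E × ℝ => (f (p.1 + p.2 • v) - f p.1) / p.2) := by
    refine ⟨-(K * ‖v‖), ?_⟩
    rw [Filter.eventually_map]
    filter_upwards [hmem] with p hp
    have := key p hp
    have := abs_le.mp this
    linarith [this.1]
  apply Filter.limsup_le_of_le (hbdd.isCoboundedUnder_le)
  filter_upwards [hmem] with p hp
  exact (abs_le.mp (key p hp)).2

set_option maxHeartbeats 1000000 in
theorem stmt9 {n : ℕ} (f : EuclideanSpace ℝ (Fin n) → ℝ)
    (hf : WeaklyLowerSemismooth f)
    (x₀ vtil : EuclideanSpace ℝ (Fin n)) (hv : vtil ≠ 0)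
    (ε c ctil : ℝ) (hε : 0 < ε) (hc : c ∈ Set.Ioo (0:ℝ) 1)
    (hbad : f (x₀ + (ε / ‖vtil‖) • vtil) > f x₀ - c * ε * ‖vtil‖)
    (hctil : ctil ∈ Set.Ioo (-((f (x₀ + (ε / ‖vtil‖) • vtil) - f x₀) / (ε * ‖vtil‖))) c)
    (a b : ℕ → ℝ) (ha0 : a 0 = 0) (hb0 : b 0 = ε / ‖vtil‖)
    (hstep : BisectStep (fun t => f (x₀ + t • vtil) - f x₀ + ctil * t * ‖vtil‖^2) a b)
    (ξ' : ℕ → EuclideanSpace ℝ (Fin n))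
    (hξ' : ∀ j, ξ' j ∈ clarkeSubdiff f (x₀ + ((a j + b j) / 2) • vtil)) :
    ∃ j, ⟪ξ' j, vtil⟫ > -c * ‖vtil‖^2 := by
  by_contra hcon
  push_neg at hcon
  have hvn : 0 < ‖vtil‖ := norm_pos_iff.mpr hv
  have hn2 : 0 < ‖vtil‖^2 := by positivity
  set h : ℝ → ℝ := fun t => f (x₀ + t • vtil) - f x₀ + ctil * t * ‖vtil‖^2 with hh
  -- basic invariants
  have hab : ∀ j, a j < b j ∧ h (a j) < h (b j) := by
    intro j
    induction j with
    | zero =>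
      constructor
      · rw [ha0, hb0]; positivity
      · rw [ha0, hb0]
        have h0 : h 0 = 0 := by simp [hh]
        have hb0' : h (ε / ‖vtil‖) =
            (f (x₀ + (ε / ‖vtil‖) • vtil) - f x₀) + ctil * (ε * ‖vtil‖) := by
          simp only [hh]
          have : ctil * (ε / ‖vtil‖) * ‖vtil‖^2 = ctil * (ε * ‖vtil‖) := by
            field_simp
          rw [this]
        have hεv : 0 < ε * ‖vtil‖ := by positivity
        have hlow := hctil.1
        rw [neg_div' ] at hlow
        have hlow' : -(f (x₀ + (ε / ‖vtil‖) • vtil) - f x₀) < ctil * (ε * ‖vtil‖) := by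
          have := (div_lt_iff₀ hεv).mp hlow
          linarith
        rw [h0, hb0']
        linarith
    | succ j ih =>
      obtain ⟨hj1, hj2⟩ := ih
      have ht1 : a j < (a j + b j)/2 := by linarith
      have ht2 : (a j + b j)/2 < b j := by linarith
      by_cases hcase : h (b j) > h ((a j + b j)/2)
      · obtain ⟨e1, e2⟩ := (hstep j).1 hcase
        rw [e1, e2]; exact ⟨ht2, hcase⟩
      · obtain ⟨e1, e2⟩ := (hstep j).2 hcase
        rw [e1, e2]
        push_neg at hcase
        exact ⟨ht1, lt_of_lt_of_le hj2 hcase⟩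
  have hamono : Monotone a := by
    apply monotone_nat_of_le_succ
    intro j
    by_cases hcase : h (b j) > h ((a j + b j)/2)
    · rw [((hstep j).1 hcase).1]; linarith [(hab j).1]
    · rw [((hstep j).2 hcase).1]
  have hbmono : Antitone b := by
    apply antitone_nat_of_succ_le
    intro j
    by_cases hcase : h (b j) > h ((a j + b j)/2)
    · rw [((hstep j).1 hcase).2]
    · rw [((hstep j).2 hcase).2]; linarith [(hab j).1]
  have hhbmono : Monotone (fun j => h (b j)) := by
    apply monotone_nat_of_le_succ
    intro j
    by_cases hcase : h (b j) > h ((a j + b j)/2)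
    · rw [((hstep j).1 hcase).2]
    · rw [((hstep j).2 hcase).2]; push_neg at hcase; exact hcase
  have hab' : ∀ j k, a j ≤ b k := by
    intro j k
    rcases le_total j k with hjk | hjk
    · exact le_trans (hamono hjk) (hab k).1.le
    · exact le_trans (hab j).1.le (hbmono hjk)
  have hbddA : BddAbove (Set.range a) := ⟨b 0, by rintro _ ⟨j, rfl⟩; exact hab' j 0⟩
  set T : ℝ := ⨆ j, a j with hT
  have haT : Tendsto a atTop (𝓝 T) := tendsto_atTop_ciSup hamono hbddA
  have haleT : ∀ j, a j ≤ T := fun j => le_ciSup hbddA j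
  have hTle : ∀ j, T ≤ b j := fun j => ciSup_le (fun k => hab' k j)
  have hdiff : ∀ j, b j - a j = (b 0 - a 0) / 2^j := by
    intro j
    induction j with
    | zero => simp
    | succ j ih =>
      have step : b (j+1) - a (j+1) = (b j - a j)/2 := by
        by_cases hcase : h (b j) > h ((a j + b j)/2)
        · obtain ⟨e1, e2⟩ := (hstep j).1 hcase
          rw [e1, e2]; ring
        · obtain ⟨e1, e2⟩ := (hstep j).2 hcase
          rw [e1, e2]; ring
      rw [step, ih, pow_succ]; ring
  have hdiff0 : Tendsto (fun j => b j - a j) atTop (𝓝 0) := by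
    have : Tendsto (fun j : ℕ => (b 0 - a 0) * (1/2 : ℝ)^j) atTop (𝓝 ((b 0 - a 0) * 0)) := by
      exact Tendsto.const_mul _ (tendsto_pow_atTop_nhds_zero_of_lt_one (by norm_num) (by norm_num))
    rw [mul_zero] at this
    apply this.congr
    intro j
    rw [hdiff j]
    rw [div_pow, one_pow]
    ring
  have hbT : Tendsto b atTop (𝓝 T) := by
    have := haT.add hdiff0
    simpa using this
  have hmidT : Tendsto (fun j => (a j + b j)/2) atTop (𝓝 T) := by
    have := (haT.add hbT).div_const 2
    have hTT : (T + T)/2 = T := by ring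
    rwa [hTT] at this
  have hcont : Continuous h := by
    have hfc : Continuous f := hf.1.continuous
    exact ((hfc.comp (continuous_const.add (continuous_id.smul continuous_const))).sub
      continuous_const).add (by continuity)
  have hhbT : Tendsto (fun j => h (b j)) atTop (𝓝 (h T)) := (hcont.tendsto T).comp hbT
  have hhb_le : ∀ j, h (b j) ≤ h T := fun j => hhbmono.ge_of_tendsto hhbT j
  have hnoconst : ∀ J, ¬ (∀ k, J ≤ k → a k = a J) := by
    intro J hJ
    have hTa : T = a J := by
      have : Tendsto a atTop (𝓝 (a J)) := by
        have hc' : Tendsto (fun _ : ℕ => a J) atTop (𝓝 (a J)) := tendsto_const_nhds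
        apply hc'.congr'
        filter_upwards [eventually_ge_atTop J] with k hk
        exact (hJ k hk).symm
      exact tendsto_nhds_unique haT this
    have h1 : h (a J) < h (b J) := (hab J).2
    have h2 : h (b J) ≤ h T := hhb_le J
    rw [hTa] at h2
    linarith
  have hconst_of : ∀ J, (∀ k, J ≤ k → ¬ h (b k) > h ((a k + b k)/2)) → False := by
    intro J hJ
    apply hnoconst J
    intro k hk
    induction k, hk using Nat.le_induction with
    | base => rfl
    | succ k hk ih =>
      rw [((hstep k).2 (hJ k hk)).1, ih]
  have hcase1_lt : ∀ j, h (b j) > h ((a j + b j)/2) → (a j + b j)/2 < T := by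
    intro j hcase
    have e1 := ((hstep j).1 hcase).1
    have hle : (a j + b j)/2 ≤ T := e1 ▸ haleT (j+1)
    rcases lt_or_eq_of_le hle with hlt | heq
    · exact hlt
    · exfalso
      apply hconst_of (j+1)
      intro k hk hck
      -- first: a k = a (j+1) = T for all k ≥ j+1
      have haconst : ∀ m, j+1 ≤ m → a m = T := by
        intro m hm
        induction m, hm using Nat.le_induction with
        | base => rw [e1, heq]
        | succ m hm ih =>
          by_cases hcm : h (b m) > h ((a m + b m)/2)
          · exfalso
            have e := ((hstep m).1 hcm).1
            have h1 : a m < (a m + b m)/2 := by linarith [(hab m).1]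
            have h2 : a (m+1) ≤ T := haleT (m+1)
            rw [e] at h2
            rw [ih] at h1
            linarith
          · rw [((hstep m).2 hcm).1, ih]
      have e := ((hstep k).1 hck).1
      have h1 : a k < (a k + b k)/2 := by linarith [(hab k).1]
      have h2 : a (k+1) ≤ T := haleT (k+1)
      rw [e] at h2
      rw [haconst k hk] at h1 h2
      linarith
  have hfreq : ∃ᶠ j in atTop, h (b j) > h ((a j + b j)/2) ∧ (a j + b j)/2 < T := by
    rw [Filter.frequently_atTop]
    intro J
    by_contra hnot
    push_neg at hnot
    apply hconst_of J
    intro k hk hck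
    exact absurd (hcase1_lt k hck) (by
      have := hnot k hk hck
      linarith)
  obtain ⟨φ, hφmono, hφ⟩ := Filter.extraction_of_frequently_atTop hfreq
  set x : EuclideanSpace ℝ (Fin n) := x₀ + T • vtil with hxdef
  set s : ℕ → ℝ := fun k => T - (a (φ k) + b (φ k))/2 with hs
  have hs_pos : ∀ k, 0 < s k := fun k => sub_pos.mpr (hφ k).2
  have hsT : Tendsto s atTop (𝓝 0) := by
    have hcT : Tendsto (fun _ : ℕ => T) atTop (𝓝 T) := tendsto_const_nhds
    have := hcT.sub (hmidT.comp hφmono.tendsto_atTop)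
    simpa [hs] using this
  have hrewrite : ∀ k, x + s k • (-vtil) = x₀ + ((a (φ k) + b (φ k))/2) • vtil := by
    intro k
    rw [hxdef, hs]
    module
  have hmem : ∀ k, ξ' (φ k) ∈ clarkeSubdiff f (x + s k • (-vtil)) := by
    intro k
    rw [hrewrite k]
    exact hξ' (φ k)
  have hkey := hf.2 x (-vtil) s (fun k => ξ' (φ k)) hs_pos hsT hmem
  -- Lipschitz data near x
  obtain ⟨K, U, hU, hlipU⟩ := hf.1 x
  obtain ⟨R, hR, hball⟩ := Metric.mem_nhds_iff.mp hU
  have hlip : LipschitzOnWith K f (Metric.ball x R) := hlipU.mono hball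
  -- liminf ≤ ctil * ‖vtil‖^2
  have hsT' : Tendsto s atTop (𝓝[>] (0:ℝ)) :=
    tendsto_nhdsWithin_of_tendsto_nhds_of_eventually_within _ hsT
      (Filter.Eventually.of_forall fun k => hs_pos k)
  have hquot : ∀ k, (f (x + s k • (-vtil)) - f x) / s k ≤ ctil * ‖vtil‖^2 := by
    intro k
    rw [hrewrite k]
    set m : ℝ := (a (φ k) + b (φ k))/2 with hm
    have hhm : h m < h T := lt_of_lt_of_le (hφ k).1 (hhb_le (φ k))
    simp only [hh] at hhm
    rw [hxdef]
    rw [div_le_iff₀ (hs_pos k)]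
    have hsk : s k = T - m := rfl
    rw [hsk]
    nlinarith [hhm]
  have hLbdd : Filter.IsBoundedUnder (· ≥ ·) (𝓝[>] (0:ℝ))
      (fun t : ℝ => (f (x + t • (-vtil)) - f x) / t) := by
    refine ⟨-(K * ‖vtil‖), ?_⟩
    rw [Filter.eventually_map]
    have hδpos : (0:ℝ) < R / (‖vtil‖ + 1) := by positivity
    filter_upwards [Ioo_mem_nhdsGT_of_mem ⟨le_refl (0:ℝ), hδpos⟩] with t ht
    have htpos : 0 < t := ht.1
    have hnorm : ‖t • (-vtil)‖ = t * ‖vtil‖ := by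
      rw [norm_smul, Real.norm_eq_abs, abs_of_pos htpos, norm_neg]
    have hin : x + t • (-vtil) ∈ Metric.ball x R := by
      rw [Metric.mem_ball, dist_eq_norm]
      have : x + t • (-vtil) - x = t • (-vtil) := by abel
      rw [this, hnorm]
      have h1 : t * (‖vtil‖ + 1) < R :=
        (lt_div_iff₀ (by positivity : (0:ℝ) < ‖vtil‖ + 1)).mp ht.2
      nlinarith [norm_nonneg vtil, htpos]
    have hx0 : x ∈ Metric.ball x R := Metric.mem_ball_self hR
    have hdf := hlip.dist_le_mul _ hin _ hx0
    rw [Real.dist_eq, dist_eq_norm] at hdf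
    have : x + t • (-vtil) - x = t • (-vtil) := by abel
    rw [this, hnorm] at hdf
    have habs := abs_le.mp hdf
    rw [ge_iff_le, neg_le, ← neg_div, div_le_iff₀ htpos]
    nlinarith [habs.1]
  have hliminf_le : Filter.liminf (fun t : ℝ => (f (x + t • (-vtil)) - f x) / t)
      (𝓝[>] (0:ℝ)) ≤ ctil * ‖vtil‖^2 := by
    exact Filter.liminf_le_of_frequently_le
      (hsT'.frequently (Filter.Frequently.of_forall hquot)) hLbdd
  -- limsup ≥ c * ‖vtil‖^2
  have hub : Filter.IsBoundedUnder (· ≤ ·) atTop (fun k => ⟪ξ' (φ k), -vtil⟫) := by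
    refine ⟨(K : ℝ) * ‖vtil‖, ?_⟩
    rw [Filter.eventually_map]
    have hδpos : (0:ℝ) < (R/2) / (‖vtil‖ + 1) := by positivity
    filter_upwards [hsT.eventually_lt_const hδpos] with k hk
    have hskpos := hs_pos k
    have hnorm : ‖s k • (-vtil)‖ = s k * ‖vtil‖ := by
      rw [norm_smul, Real.norm_eq_abs, abs_of_pos hskpos, norm_neg]
    have hdist : dist (x + s k • (-vtil)) x ≤ R/2 := by
      rw [dist_eq_norm]
      have : x + s k • (-vtil) - x = s k • (-vtil) := by abel
      rw [this, hnorm]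
      have hk' : s k * (‖vtil‖ + 1) < R/2 :=
        (lt_div_iff₀ (by positivity : (0:ℝ) < ‖vtil‖ + 1)).mp hk
      nlinarith [norm_nonneg vtil, hskpos]
    have hsub : Metric.ball (x + s k • (-vtil)) (R/2) ⊆ Metric.ball x R :=
      Metric.ball_subset_ball' (by linarith)
    have hlip2 : LipschitzOnWith K f (Metric.ball (x + s k • (-vtil)) (R/2)) :=
      hlip.mono hsub
    calc ⟪ξ' (φ k), -vtil⟫ ≤ clarkeDir f (x + s k • (-vtil)) (-vtil) := hmem k (-vtil)
      _ ≤ K * ‖-vtil‖ := clarkeDir_le_of_lip f K _ (-vtil) (R/2) (by linarith) hlip2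
      _ = K * ‖vtil‖ := by rw [norm_neg]
  have hlimsup_ge : c * ‖vtil‖^2 ≤ Filter.limsup (fun k => ⟪ξ' (φ k), -vtil⟫) atTop := by
    apply Filter.le_limsup_of_frequently_le _ hub
    apply Filter.Frequently.of_forall
    intro k
    rw [inner_neg_right]
    have := hcon (φ k)
    linarith
  have hfinal : c * ‖vtil‖^2 ≤ ctil * ‖vtil‖^2 :=
    le_trans hlimsup_ge (le_trans hkey hliminf_le)
  have : c ≤ ctil := (mul_le_mul_iff_of_pos_right hn2).mp hfinal
  linarith [hctil.2]
end

section
/- If f : ℝⁿ → ℝ is locally Lipschitz, x₀, ṽ ∈ ℝⁿ, c̃ ∈ ℝ, and h_c̃(t) := f(x₀ + tṽ) - f(x₀) + c̃ t ‖ṽ‖², then the Clarke subdifferential satisfies ∂h_c̃(t) ⊆ {⟨ξ, ṽ⟩ + c̃‖ṽ‖² : ξ ∈ ∂f(x₀ + tṽ)} for every t ∈ ℝ. -/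
open Filter Set Topology RealInnerProductSpace

namespace StmtAux

open Filter

variable {E : Type*} [NormedAddCommGroup E] [InnerProductSpace ℝ E]

/-- The filter used in the definition of the Clarke directional derivative. -/
def Gfil {E : Type*} [NormedAddCommGroup E] (x : E) : Filter (E × ℝ) :=
  (nhds x) ×ˢ (nhdsWithin 0 (Set.Ioi 0))

/-- The difference quotient. -/
noncomputable def qt (f : E → ℝ) (v : E) (p : E × ℝ) : ℝ :=
  (f (p.1 + p.2 • v) - f p.1) / p.2

instance Gfil_neBot (x : E) : (Gfil x).NeBot := by
  unfold Gfil
  infer_instance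

lemma clarkeDir_eq (f : E → ℝ) (x v : E) :
    clarkeDir f x v = limsup (qt f v) (Gfil x) := rfl

lemma hpos_ev {E : Type*} [NormedAddCommGroup E] (x : E) :
    ∀ᶠ p : E × ℝ in Gfil x, 0 < p.2 := by
  have h : ∀ᶠ σ in nhdsWithin (0:ℝ) (Set.Ioi 0), σ ∈ Set.Ioi (0:ℝ) :=
    self_mem_nhdsWithin
  exact (tendsto_snd (f := nhds x)).eventually h

lemma qt_bound (f : E → ℝ) (hf : LocallyLipschitz f) (x v : E) :
    ∃ C : ℝ, ∀ᶠ p in Gfil x, |qt f v p| ≤ C := by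
  obtain ⟨K, U, hU, hK⟩ := hf x
  obtain ⟨ε, hε, hball⟩ := Metric.mem_nhds_iff.1 hU
  refine ⟨K * ‖v‖, ?_⟩
  have hδ : (0:ℝ) < ε / (2 * (‖v‖ + 1)) := by positivity
  have h1 : ∀ᶠ y in nhds x, y ∈ Metric.ball x (ε / 2) :=
    Metric.ball_mem_nhds x (by positivity)
  have h2 : ∀ᶠ σ in nhdsWithin (0:ℝ) (Set.Ioi 0), σ ∈ Set.Ioo 0 (ε / (2 * (‖v‖ + 1))) :=
    Ioo_mem_nhdsGT_of_mem ⟨le_refl 0, hδ⟩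
  filter_upwards [h1.prod_mk h2] with p hp
  have hy := hp.1
  have hσ0 := hp.2.1
  have hσδ := hp.2.2
  have hyx : dist p.1 x < ε / 2 := Metric.mem_ball.1 hy
  have hyU : p.1 ∈ U := hball (Metric.mem_ball.2 (by linarith))
  have hd : dist (p.1 + p.2 • v) p.1 = p.2 * ‖v‖ := by
    rw [dist_eq_norm, add_sub_cancel_left, norm_smul, Real.norm_eq_abs, abs_of_pos hσ0]
  have hb : p.2 * ‖v‖ ≤ ε / 2 := by
    have h3 : p.2 * ‖v‖ ≤ (ε / (2 * (‖v‖ + 1))) * ‖v‖ :=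
      mul_le_mul_of_nonneg_right hσδ.le (norm_nonneg v)
    have h4 : (ε / (2 * (‖v‖ + 1))) * ‖v‖ ≤ ε / 2 := by
      rw [div_mul_eq_mul_div, div_le_div_iff₀ (by positivity) (by norm_num)]
      nlinarith [norm_nonneg v]
    linarith
  have hy2 : p.1 + p.2 • v ∈ U := by
    apply hball
    have htr := dist_triangle (p.1 + p.2 • v) p.1 x
    rw [hd] at htr
    exact Metric.mem_ball.2 (by linarith)
  have hlip := hK.dist_le_mul _ hy2 _ hyU
  rw [hd] at hlip
  have habs : |qt f v p| = dist (f (p.1 + p.2 • v)) (f p.1) / p.2 := by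
    rw [qt, Real.dist_eq, abs_div, abs_of_pos hσ0]
  rw [habs, div_le_iff₀ hσ0]
  calc dist (f (p.1 + p.2 • v)) (f p.1) ≤ K * (p.2 * ‖v‖) := hlip
    _ = K * ‖v‖ * p.2 := by ring

lemma qt_bddAbove (f : E → ℝ) (hf : LocallyLipschitz f) (x v : E) :
    (Gfil x).IsBoundedUnder (· ≤ ·) (qt f v) := by
  obtain ⟨C, hC⟩ := qt_bound f hf x v
  exact ⟨C, eventually_map.2 (hC.mono fun p hp => (abs_le.1 hp).2)⟩

lemma qt_bddBelow (f : E → ℝ) (hf : LocallyLipschitz f) (x v : E) :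
    (Gfil x).IsBoundedUnder (· ≥ ·) (qt f v) := by
  obtain ⟨C, hC⟩ := qt_bound f hf x v
  exact ⟨-C, eventually_map.2 (hC.mono fun p hp => (abs_le.1 hp).1)⟩

lemma comp_bddAbove {α : Type*} {F : Filter α} {m : α → E × ℝ} {x : E}
    (hm : Tendsto m F (Gfil x)) (f : E → ℝ) (hf : LocallyLipschitz f) (v : E) :
    F.IsBoundedUnder (· ≤ ·) (fun a => qt f v (m a)) := by
  obtain ⟨C, hC⟩ := qt_bound f hf x v
  exact ⟨C, eventually_map.2 ((hm.eventually hC).mono fun p hp => (abs_le.1 hp).2)⟩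

lemma comp_bddBelow {α : Type*} {F : Filter α} {m : α → E × ℝ} {x : E}
    (hm : Tendsto m F (Gfil x)) (f : E → ℝ) (hf : LocallyLipschitz f) (v : E) :
    F.IsBoundedUnder (· ≥ ·) (fun a => qt f v (m a)) := by
  obtain ⟨C, hC⟩ := qt_bound f hf x v
  exact ⟨-C, eventually_map.2 ((hm.eventually hC).mono fun p hp => (abs_le.1 hp).1)⟩

lemma limsup_comp (u : E × ℝ → ℝ) {α : Type*} (F : Filter α) (m : α → E × ℝ) :
    limsup (fun a => u (m a)) F = limsup u (map m F) := by
  rw [Filter.limsup, Filter.limsup, Filter.map_map]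
  rfl

lemma limsup_comp_le {α : Type*} {F : Filter α} [F.NeBot] {m : α → E × ℝ} {x : E}
    (hm : Tendsto m F (Gfil x)) (f : E → ℝ) (hf : LocallyLipschitz f) (v : E) :
    limsup (fun a => qt f v (m a)) F ≤ clarkeDir f x v := by
  rw [limsup_comp (qt f v) F m, clarkeDir_eq]
  have hlow : (map m F).IsBoundedUnder (· ≥ ·) (qt f v) := by
    obtain ⟨C, hC⟩ := qt_bound f hf x v
    exact ⟨-C, eventually_map.2 (eventually_map.2
      ((hm.eventually hC).mono fun p hp => (abs_le.1 hp).1))⟩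
  haveI : (map m F).NeBot := map_neBot
  exact limsup_le_limsup_of_le hm hlow.isCoboundedUnder_le (qt_bddAbove f hf x v)

/-- Positive homogeneity of the Clarke directional derivative. -/
lemma clarkeDir_smul (f : E → ℝ) (hf : LocallyLipschitz f) (x : E) {c : ℝ} (hc : 0 < c)
    (v : E) : clarkeDir f x (c • v) = c * clarkeDir f x v := by
  classical
  set m : E × ℝ → E × ℝ := fun p => (p.1, c * p.2) with hm_def
  set minv : E × ℝ → E × ℝ := fun p => (p.1, c⁻¹ * p.2) with hminv_def
  have htend : ∀ (d : ℝ), 0 < d →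
      Tendsto (fun p : E × ℝ => (p.1, d * p.2)) (Gfil x) (Gfil x) := by
    intro d hd
    apply Tendsto.prodMk tendsto_fst
    rw [tendsto_nhdsWithin_iff]
    constructor
    · have hmul : Tendsto (fun σ : ℝ => d * σ) (nhds 0) (nhds 0) := by
        have := (continuous_const.mul continuous_id : Continuous fun σ : ℝ => d * σ).tendsto (0:ℝ)
        have h2 : Tendsto (fun σ : ℝ => d * σ) (nhds 0) (nhds (d * 0)) := this
        rwa [mul_zero] at h2
      exact (hmul.mono_left nhdsWithin_le_nhds).comp tendsto_snd
    · filter_upwards [hpos_ev x] with p hp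
      exact Set.mem_Ioi.2 (by positivity)
  have h1 : Tendsto m (Gfil x) (Gfil x) := htend c hc
  have h2 : Tendsto minv (Gfil x) (Gfil x) := htend c⁻¹ (by positivity)
  have hcomp : m ∘ minv = id := by
    funext p
    simp only [m, minv, Function.comp, id]
    rw [← mul_assoc, mul_inv_cancel₀ hc.ne']
    simp
  have hmapeq : map m (Gfil x) = Gfil x := by
    refine le_antisymm h1 ?_
    calc Gfil x = map m (map minv (Gfil x)) := by rw [map_map, hcomp, map_id]
      _ ≤ map m (Gfil x) := map_mono h2
  have heq : ∀ᶠ p in Gfil x, qt f (c • v) p = c * qt f v (m p) := by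
    filter_upwards [hpos_ev x] with p hp
    simp only [qt, m]
    have harg : p.1 + p.2 • (c • v) = p.1 + (c * p.2) • v := by
      rw [smul_smul, mul_comm]
    rw [harg]
    field_simp
  rw [clarkeDir_eq, clarkeDir_eq, limsup_congr heq]
  have : limsup (fun p => c * qt f v (m p)) (Gfil x)
      = limsup (fun z => c * qt f v z) (map m (Gfil x)) :=
    limsup_comp (fun z => c * qt f v z) (Gfil x) m
  rw [this, hmapeq]
  have hmono : Monotone (fun r : ℝ => c * r) := fun a b hab =>
    mul_le_mul_of_nonneg_left hab hc.le
  have := hmono.map_limsup_of_continuousAt (F := Gfil x) (qt f v)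
    ((continuous_const.mul continuous_id).continuousAt)
    (qt_bddAbove f hf x v) ((qt_bddBelow f hf x v).isCoboundedUnder_le)
  exact (this).symm

/-- Subadditivity of the Clarke directional derivative. -/
lemma clarkeDir_add_le (f : E → ℝ) (hf : LocallyLipschitz f) (x : E) (v w : E) :
    clarkeDir f x (v + w) ≤ clarkeDir f x v + clarkeDir f x w := by
  set m : E × ℝ → E × ℝ := fun p => (p.1 + p.2 • w, p.2) with hm_def
  have hm : Tendsto m (Gfil x) (Gfil x) := by
    apply Tendsto.prodMk _ tendsto_snd
    have : Tendsto (fun p : E × ℝ => p.1 + p.2 • w) (Gfil x) (nhds (x + (0:ℝ) • w)) :=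
      tendsto_fst.add ((tendsto_snd.mono_right nhdsWithin_le_nhds).smul_const w)
    simpa [Gfil] using this
  have heq : ∀ p : E × ℝ, qt f (v + w) p = qt f v (m p) + qt f w p := by
    intro p
    simp only [qt, m]
    have harg : p.1 + p.2 • (v + w) = p.1 + p.2 • w + p.2 • v := by
      rw [smul_add]; abel
    rw [harg, ← add_div]
    ring_nf
  rw [clarkeDir_eq, limsup_congr (Eventually.of_forall heq)]
  calc limsup (fun p => qt f v (m p) + qt f w p) (Gfil x)
      ≤ limsup (fun p => qt f v (m p)) (Gfil x) + limsup (qt f w) (Gfil x) :=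
        limsup_add_le (comp_bddBelow hm f hf v) (comp_bddAbove hm f hf v)
          ((qt_bddBelow f hf x w).isCoboundedUnder_le) (qt_bddAbove f hf x w)
    _ ≤ clarkeDir f x v + clarkeDir f x w :=
        add_le_add (limsup_comp_le hm f hf v) (le_of_eq (clarkeDir_eq f x w).symm)

lemma clarkeDir_zero (f : E → ℝ) (x : E) : clarkeDir f x 0 = 0 := by
  rw [clarkeDir_eq]
  have : qt f (0 : E) = fun _ => (0:ℝ) := by
    funext p; simp [qt]
  rw [this, limsup_const]

/-- The chain inequality. -/
lemma chain_le (f : E → ℝ) (hf : LocallyLipschitz f) (x₀ vtil : E) (ctil t v : ℝ) :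
    clarkeDir (fun s : ℝ => f (x₀ + s • vtil) - f x₀ + ctil * s * ‖vtil‖^2) t v ≤
      clarkeDir f (x₀ + t • vtil) (v • vtil) + ctil * v * ‖vtil‖^2 := by
  set y := x₀ + t • vtil with hy_def
  set m : ℝ × ℝ → E × ℝ := fun p => (x₀ + p.1 • vtil, p.2) with hm_def
  have hm : Tendsto m (Gfil t) (Gfil y) := by
    apply Tendsto.prodMk _ tendsto_snd
    have hc : Tendsto (fun s : ℝ => x₀ + s • vtil) (nhds t) (nhds y) := by
      have : Continuous (fun s : ℝ => x₀ + s • vtil) :=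
        continuous_const.add (continuous_id.smul continuous_const)
      exact this.tendsto t
    exact hc.comp tendsto_fst
  have heq : ∀ᶠ p : ℝ × ℝ in Gfil t,
      qt (fun s : ℝ => f (x₀ + s • vtil) - f x₀ + ctil * s * ‖vtil‖^2) v p
        = qt f (v • vtil) (m p) + ctil * v * ‖vtil‖^2 := by
    filter_upwards [hpos_ev t] with p hp
    simp only [qt, m]
    have harg : x₀ + (p.1 + p.2 • v) • vtil = (x₀ + p.1 • vtil) + p.2 • (v • vtil) := by
      simp only [smul_eq_mul, add_smul, mul_smul]
      abel
    rw [harg]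
    have hne : p.2 ≠ 0 := hp.ne'
    simp only [smul_eq_mul]
    field_simp
    ring
  rw [clarkeDir_eq, limsup_congr heq]
  have hba := comp_bddAbove hm f hf (v • vtil)
  have hbb := comp_bddBelow hm f hf (v • vtil)
  have hmono : Monotone (fun r : ℝ => r + ctil * v * ‖vtil‖^2) :=
    fun a b hab => add_le_add_left hab _
  have hmap := hmono.map_limsup_of_continuousAt (F := Gfil t)
    (fun p => qt f (v • vtil) (m p))
    ((continuous_id.add continuous_const).continuousAt)
    hba hbb.isCoboundedUnder_le
  have h5 : limsup (fun p => qt f (v • vtil) (m p) + ctil * v * ‖vtil‖^2) (Gfil t)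
      = limsup (fun p => qt f (v • vtil) (m p)) (Gfil t) + ctil * v * ‖vtil‖^2 :=
    hmap.symm
  rw [h5]
  have := limsup_comp_le hm f hf (v • vtil)
  linarith

end StmtAux

theorem stmt10 {n : ℕ} (f : EuclideanSpace ℝ (Fin n) → ℝ) (hf : LocallyLipschitz f)
    (x₀ vtil : EuclideanSpace ℝ (Fin n)) (ctil : ℝ) :
    ∀ t : ℝ,
      clarkeSubdiff (fun s : ℝ => f (x₀ + s • vtil) - f x₀ + ctil * s * ‖vtil‖^2) t ⊆
        {g : ℝ | ∃ ξ ∈ clarkeSubdiff f (x₀ + t • vtil), g = ⟪ξ, vtil⟫ + ctil * ‖vtil‖^2} := by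
  classical
  intro t g hg
  set y : EuclideanSpace ℝ (Fin n) := x₀ + t • vtil with hy_def
  set N : EuclideanSpace ℝ (Fin n) → ℝ := fun w => clarkeDir f y w with hN_def
  have hinner : ∀ a b : ℝ, (⟪a, b⟫ : ℝ) = a * b := fun a b => by
    simp [RCLike.inner_apply, starRingEnd_apply, mul_comm]
  have hg' : ∀ v : ℝ, g * v ≤
      clarkeDir (fun s : ℝ => f (x₀ + s • vtil) - f x₀ + ctil * s * ‖vtil‖^2) t v := by
    intro v
    have := hg v
    rwa [hinner] at this
  have key : ∀ v : ℝ, (g - ctil * ‖vtil‖^2) * v ≤ clarkeDir f y (v • vtil) := by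
    intro v
    have h1 := hg' v
    have h2 := StmtAux.chain_le f hf x₀ vtil ctil t v
    nlinarith [h1, h2]
  have N_hom : ∀ c : ℝ, 0 < c → ∀ w : EuclideanSpace ℝ (Fin n), N (c • w) = c * N w := by
    intro c hc w
    exact StmtAux.clarkeDir_smul f hf y hc w
  have N_add : ∀ v w : EuclideanSpace ℝ (Fin n), N (v + w) ≤ N v + N w := fun v w =>
    StmtAux.clarkeDir_add_le f hf y v w
  by_cases hv : vtil = 0
  · -- degenerate case
    have hg0 : g = 0 := by
      have hdir : ∀ v : ℝ,
          clarkeDir (fun s : ℝ => f (x₀ + s • vtil) - f x₀ + ctil * s * ‖vtil‖^2) t v = 0 := by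
        intro v
        have hfun : (fun s : ℝ => f (x₀ + s • vtil) - f x₀ + ctil * s * ‖vtil‖^2)
            = fun _ : ℝ => (0:ℝ) := by
          funext s; simp [hv]
        rw [hfun]
        rw [StmtAux.clarkeDir_eq]
        have : StmtAux.qt (fun _ : ℝ => (0:ℝ)) v = fun _ => (0:ℝ) := by
          funext p; simp [StmtAux.qt]
        rw [this, limsup_const]
      have ha := hg' 1
      have hb := hg' (-1)
      rw [hdir 1] at ha
      rw [hdir (-1)] at hb
      nlinarith
    -- extend the zero functional from the trivial subspace
    set f0 : EuclideanSpace ℝ (Fin n) →ₗ.[ℝ] ℝ := ⟨⊥, 0⟩ with hf0_def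
    have hdom : ∀ z : f0.domain, f0 z ≤ N z := by
      rintro ⟨z, hz⟩
      have hz0 : z = 0 := (Submodule.mem_bot ℝ).1 hz
      have h0 : f0 ⟨z, hz⟩ = 0 := rfl
      rw [h0]
      show (0:ℝ) ≤ N z
      rw [hz0]
      exact le_of_eq (StmtAux.clarkeDir_zero f y).symm
    obtain ⟨glin, _, hle⟩ := exists_extension_of_le_sublinear f0 N N_hom N_add hdom
    set ξ : EuclideanSpace ℝ (Fin n) :=
      (InnerProductSpace.toDual ℝ (EuclideanSpace ℝ (Fin n))).symm
        (LinearMap.toContinuousLinearMap glin) with hξ_def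
    have hξ_inner : ∀ w : EuclideanSpace ℝ (Fin n), ⟪ξ, w⟫ = glin w := fun w => by
      rw [hξ_def, InnerProductSpace.toDual_symm_apply]
      rfl
    refine ⟨ξ, ?_, ?_⟩
    · intro w
      rw [hξ_inner w]
      exact hle w
    · rw [hg0, hv]
      simp
  · -- main case, Hahn-Banach from the span of vtil
    set f0 : EuclideanSpace ℝ (Fin n) →ₗ.[ℝ] ℝ :=
      LinearPMap.mkSpanSingleton vtil (g - ctil * ‖vtil‖^2) hv with hf0_def
    have hdom : ∀ z : f0.domain, f0 z ≤ N z := by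
      rintro ⟨z, hz⟩
      obtain ⟨c, hc⟩ := Submodule.mem_span_singleton.1 hz
      subst hc
      have happ : f0 ⟨c • vtil, hz⟩ = c • (g - ctil * ‖vtil‖^2) :=
        LinearPMap.mkSpanSingleton'_apply _ _ _ c _
      rw [happ]
      calc c • (g - ctil * ‖vtil‖^2) = (g - ctil * ‖vtil‖^2) * c := by
            rw [smul_eq_mul]; ring
        _ ≤ clarkeDir f y (c • vtil) := key c
        _ = N (c • vtil) := rfl
    obtain ⟨glin, hext, hle⟩ := exists_extension_of_le_sublinear f0 N N_hom N_add hdom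
    set ξ : EuclideanSpace ℝ (Fin n) :=
      (InnerProductSpace.toDual ℝ (EuclideanSpace ℝ (Fin n))).symm
        (LinearMap.toContinuousLinearMap glin) with hξ_def
    have hξ_inner : ∀ w : EuclideanSpace ℝ (Fin n), ⟪ξ, w⟫ = glin w := fun w => by
      rw [hξ_def, InnerProductSpace.toDual_symm_apply]
      rfl
    have hval : glin vtil = g - ctil * ‖vtil‖^2 := by
      have hmem : vtil ∈ f0.domain := Submodule.mem_span_singleton_self vtil
      have h1 := hext ⟨vtil, hmem⟩
      have h2 : f0 ⟨vtil, hmem⟩ = g - ctil * ‖vtil‖^2 :=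
        LinearPMap.mkSpanSingleton_apply ℝ ℝ hv _
      exact h1.trans h2
    refine ⟨ξ, ?_, ?_⟩
    · intro w
      rw [hξ_inner w]
      exact hle w
    · rw [hξ_inner vtil, hval]
      ring
end
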